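/- arXiv:1504.03997 — 6 statements merged into one kernel-verified Lean document; each statement's English description precedes it below -/
import Mathlib

section
/- Let 1/3 < γ < 1, c_γ = (1−γ)·(2γ)^{γ/(1−γ)}, f(s) = c_γ·s^{2γ/(γ−1)}, let 0 < α₂ < 1/3 and δ > 0. Let ψ : ℝ² × ℝ → ℝ be three times continuously differentiable on a neighborhood of (x₀, t₀), let v ∈ ℝ² be a unit vector, and for each ε ∈ (0,1) let b_ε, β_ε ∈ {−1, 1} and s_ε ∈ [δ, ε^{−α₂}]. Then, as ε → 0⁺, ψ( x₀ + b_ε ε s_ε v^⊥ + β_ε ε² f(s_ε) v, t₀ + ε² ) − ψ(x₀, t₀) − ε b_ε s_ε ⟨∇ψ(x₀,t₀), v^⊥⟩ − ε² ( ∂_t ψ(x₀,t₀) + β_ε f(s_ε) ⟨∇ψ(x₀,t₀), v⟩ + (s_ε²/2) ⟨ D²ψ(x₀,t₀)·v^⊥, v^⊥ ⟩ ) = o(ε²). -/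
set_option maxHeartbeats 1000000
set_option synthInstance.maxHeartbeats 400000
set_option synthInstance.maxSize 1024


open Set Filter
open scoped Topology RealInnerProductSpace

noncomputable section

/-- The Euclidean plane. -/
abbrev E2 := EuclideanSpace ℝ (Fin 2)

/-- Rotation of a vector of the plane by `π/2`: `(a,b)^⊥ = (−b,a)`. -/
def perp (v : E2) : E2 := WithLp.toLp 2 ![-(v 1), v 0]

noncomputable instance instNACG_CLM3 {E : Type*} [NormedAddCommGroup E] [NormedSpace ℝ E] :
    NormedAddCommGroup (E →L[ℝ] E →L[ℝ] E →L[ℝ] ℝ) :=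
  @ContinuousLinearMap.toNormedAddCommGroup ℝ ℝ E (E →L[ℝ] E →L[ℝ] ℝ) _ _ _ _ _ _ (RingHom.id ℝ) _

/-- Second-order Taylor expansion with big-O cubic remainder for a `C³` function. -/
theorem taylor_two_isBigO {E : Type*} [NormedAddCommGroup E] [NormedSpace ℝ E]
    (f : E → ℝ) (z : E) (hf : ContDiffAt ℝ 3 f z) :
    (fun h : E => f (z + h) - f z - fderiv ℝ f z h
        - (1/2) * fderiv ℝ (fderiv ℝ f) z h h) =O[𝓝 (0:E)] (fun h => ‖h‖^3) := by
  set f1 := fderiv ℝ f with hf1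
  set f2 := fderiv ℝ f1 with hf2
  -- open set where f is C³
  obtain ⟨u, hu_mem, hu⟩ := hf.contDiffOn le_rfl (by simp)
  obtain ⟨u', hu'sub, hu'_open, hzu'⟩ := mem_nhds_iff.mp hu_mem
  have hu' : ContDiffOn ℝ 3 f u' := hu.mono hu'sub
  -- differentiability facts on u'
  have hdiff : ∀ y ∈ u', HasFDerivAt f (f1 y) y := fun y hy =>
    ((hu'.differentiableOn (by norm_num)).differentiableAt (hu'_open.mem_nhds hy)).hasFDerivAt
  have hcd1 : ContDiffOn ℝ 2 f1 u' := hu'.fderiv_of_isOpen hu'_open (by norm_num)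
  have hdiff2 : ∀ y ∈ u', HasFDerivAt f1 (f2 y) y := fun y hy =>
    ((hcd1.differentiableOn (by norm_num)).differentiableAt (hu'_open.mem_nhds hy)).hasFDerivAt
  -- third derivative, bounded near z
  set f3 := fderiv ℝ f2 with hf3
  have hcd2 : ContDiffOn ℝ 1 f2 u' := hcd1.fderiv_of_isOpen hu'_open (by norm_num)
  have hdiff3 : ∀ y ∈ u', HasFDerivAt f2 (f3 y) y := fun y hy =>
    ((hcd2.differentiableOn (by norm_num)).differentiableAt (hu'_open.mem_nhds hy)).hasFDerivAt
  have hf3cont : ContinuousAt f3 z := by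
    have := hcd2.continuousOn_fderiv_of_isOpen hu'_open le_rfl
    exact this.continuousAt (hu'_open.mem_nhds hzu')
  set M : ℝ := ‖f3 z‖ + 1 with hM_def
  have hM_pos : 0 < M := by positivity
  have hMev : ∀ᶠ y in 𝓝 z, ‖f3 y‖ ≤ M := by
    have h1 : Tendsto (fun y => ‖f3 y‖) (𝓝 z) (𝓝 ‖f3 z‖) := hf3cont.norm.tendsto
    filter_upwards [h1.eventually_le_const (by simp [hM_def] : ‖f3 z‖ < M)] with y hy
    exact hy
  obtain ⟨r, hr_pos, hr⟩ := Metric.mem_nhds_iff.mp (inter_mem (hu'_open.mem_nhds hzu')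
    (hMev.and (eventually_mem_nhds_iff.mpr (hu'_open.mem_nhds hzu'))))
  -- the key pointwise bound
  have key : ∀ h : E, ‖h‖ ≤ r/2 → ‖f (z + h) - f z - f1 z h - (1/2) * f2 z h h‖
      ≤ M * ‖h‖^3 := by
    intro h hh
    have hball : ∀ k : E, ‖k‖ ≤ ‖h‖ → z + k ∈ u' ∧ ‖f3 (z + k)‖ ≤ M := by
      intro k hk
      have : z + k ∈ Metric.ball z r := by
        simp only [Metric.mem_ball, dist_eq_norm, add_sub_cancel_left]
        calc ‖k‖ ≤ ‖h‖ := hk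
          _ ≤ r/2 := hh
          _ < r := by linarith
      exact ⟨(hr this).1, (hr this).2.1⟩
    -- Lipschitz-type bound on f2 near z
    have hbd2 : ∀ x : E, ‖x‖ ≤ ‖h‖ → ‖f2 (z + x) - f2 z‖ ≤ M * ‖h‖ := by
      intro x hx
      have hconv : Convex ℝ (Metric.closedBall z ‖h‖) := convex_closedBall z ‖h‖
      have hmemx : z + x ∈ Metric.closedBall z ‖h‖ := by
        simp only [Metric.mem_closedBall, dist_eq_norm, add_sub_cancel_left]; exact hx
      have hmemz : z ∈ Metric.closedBall z ‖h‖ := Metric.mem_closedBall_self (norm_nonneg h)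
      have := hconv.norm_image_sub_le_of_norm_hasFDerivWithin_le
        (𝕜 := ℝ) (f := f2) (f' := f3)
        (fun y hy => by
          have hy' : ‖y - z‖ ≤ ‖h‖ := by
            simpa [Metric.mem_closedBall, dist_eq_norm] using hy
          have := (hdiff3 y (by simpa using (hball (y - z) hy').1)).hasFDerivWithinAt
            (s := Metric.closedBall z ‖h‖)
          simpa using this)
        (fun y hy => by
          have hy' : ‖y - z‖ ≤ ‖h‖ := by
            simpa [Metric.mem_closedBall, dist_eq_norm] using hy
          simpa using (hball (y - z) hy').2)
        hmemz hmemx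
      calc ‖f2 (z + x) - f2 z‖ ≤ M * ‖z + x - z‖ := this
        _ = M * ‖x‖ := by rw [add_sub_cancel_left]
        _ ≤ M * ‖h‖ := mul_le_mul_of_nonneg_left hx hM_pos.le
    set G : E → (E →L[ℝ] ℝ) := fun k => f1 (z + k) - f1 z - f2 z k with hG_def
    have hG : ∀ k ∈ Metric.closedBall (0:E) ‖h‖,
        HasFDerivWithinAt G (f2 (z + k) - f2 z) (Metric.closedBall (0:E) ‖h‖) k := by
      intro k hk
      have hk' : ‖k‖ ≤ ‖h‖ := by simpa [Metric.mem_closedBall, dist_eq_norm] using hk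
      have h1 : HasFDerivAt (fun k : E => f1 (z + k)) (f2 (z + k)) k := by
        have := (hdiff2 (z + k) (hball k hk').1).comp k
          ((hasFDerivAt_id k).const_add z)
        simpa [Function.comp_def] using this
      exact (((h1.sub_const (f1 z)).sub (f2 z).hasFDerivAt)).hasFDerivWithinAt
    have hGbound : ∀ k : E, ‖k‖ ≤ ‖h‖ → ‖G k‖ ≤ M * ‖h‖ * ‖k‖ := by
      intro k hk
      have h0 : (0:E) ∈ Metric.closedBall (0:E) ‖h‖ := by
        simp [Metric.mem_closedBall]
      have hkmem : k ∈ Metric.closedBall (0:E) ‖h‖ := by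
        simpa [Metric.mem_closedBall, dist_eq_norm] using hk
      have hbd : ∀ x ∈ Metric.closedBall (0:E) ‖h‖, ‖f2 (z + x) - f2 z‖ ≤ M * ‖h‖ := by
        intro x hx
        exact hbd2 x (by simpa [Metric.mem_closedBall, dist_eq_norm] using hx)
      have := (convex_closedBall (0:E) ‖h‖).norm_image_sub_le_of_norm_hasFDerivWithin_le
        hG hbd h0 hkmem
      have hG0 : G 0 = 0 := by simp [hG_def]
      simpa [hG0] using this
    -- the scalar function along the segment
    set A : ℝ := f1 z h with hA
    set B : ℝ := f2 z h h / 2 with hB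
    set g : ℝ → ℝ := fun u => f (z + u • h) - u * A - u^2 * B with hg_def
    have hg : ∀ u ∈ Icc (0:ℝ) 1, HasDerivWithinAt g (G (u • h) h) (Icc (0:ℝ) 1) u := by
      intro u hu
      have huh : ‖u • h‖ ≤ ‖h‖ := by
        rw [norm_smul, Real.norm_eq_abs]
        have h1 : |u| ≤ 1 := by rw [abs_le]; exact ⟨by linarith [hu.1], hu.2⟩
        nlinarith [abs_nonneg u, norm_nonneg h]
      have h1 : HasDerivAt (fun u : ℝ => f (z + u • h)) (f1 (z + u • h) h) u := by
        have hd : HasDerivAt (fun u : ℝ => z + u • h) h u := by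
          simpa using ((hasDerivAt_id u).smul_const h).const_add z
        have := (hdiff (z + u • h) (hball (u • h) huh).1).comp_hasDerivAt u hd
        simpa [Function.comp_def] using this
      have h2 : HasDerivAt (fun u : ℝ => u * A) A u := hasDerivAt_mul_const A
      have h3 : HasDerivAt (fun u : ℝ => u^2 * B) (2 * u * B) u := by
        simpa using (hasDerivAt_pow 2 u).mul_const B
      have h4 := (h1.sub h2).sub h3
      have heq : f1 (z + u • h) h - A - 2 * u * B = G (u • h) h := by
        simp only [hG_def, hA, hB, ContinuousLinearMap.sub_apply, ContinuousLinearMap.coe_sub',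
          Pi.sub_apply, map_smul, ContinuousLinearMap.smul_apply, smul_eq_mul]
        ring
      rw [← heq]
      exact h4.hasDerivWithinAt
    have hgbound : ∀ u ∈ Icc (0:ℝ) 1, ‖G (u • h) h‖ ≤ M * ‖h‖^3 := by
      intro u hu
      have huh : ‖u • h‖ ≤ ‖h‖ := by
        rw [norm_smul, Real.norm_eq_abs]
        have h1 : |u| ≤ 1 := by rw [abs_le]; exact ⟨by linarith [hu.1], hu.2⟩
        nlinarith [abs_nonneg u, norm_nonneg h]
      calc ‖G (u • h) h‖ ≤ ‖G (u • h)‖ * ‖h‖ := (G (u • h)).le_opNorm h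
        _ ≤ (M * ‖h‖ * ‖u • h‖) * ‖h‖ := by
            apply mul_le_mul_of_nonneg_right (hGbound _ huh) (norm_nonneg h)
        _ ≤ (M * ‖h‖ * ‖h‖) * ‖h‖ := by
            apply mul_le_mul_of_nonneg_right _ (norm_nonneg h)
            exact mul_le_mul_of_nonneg_left huh (by positivity)
        _ = M * ‖h‖^3 := by ring
    have := (convex_Icc (0:ℝ) 1).norm_image_sub_le_of_norm_hasDerivWithin_le hg hgbound
      (left_mem_Icc.mpr zero_le_one) (right_mem_Icc.mpr zero_le_one)
    have hg1 : g 1 = f (z + h) - A - B := by simp [hg_def]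
    have hg0 : g 0 = f z := by simp [hg_def]
    rw [hg1, hg0] at this
    calc ‖f (z + h) - f z - f1 z h - (1/2) * f2 z h h‖
        = ‖f (z + h) - A - B - f z‖ := by rw [hA, hB]; ring_nf
      _ ≤ M * ‖h‖^3 * ‖(1:ℝ) - 0‖ := this
      _ = M * ‖h‖^3 := by simp
  -- conclude
  apply Asymptotics.IsBigO.of_bound M
  filter_upwards [Metric.closedBall_mem_nhds (0:E) (by positivity : (0:ℝ) < r/2)] with h hh
  have hh' : ‖h‖ ≤ r/2 := by simpa [Metric.mem_closedBall, dist_eq_norm] using hh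
  calc ‖f (z + h) - f z - f1 z h - (1/2) * f2 z h h‖ ≤ M * ‖h‖^3 := key h hh'
    _ = M * ‖(‖h‖^3)‖ := by rw [Real.norm_of_nonneg (by positivity)]

/-- one-step Taylor expansion of a `C³` test function along a move of the
curvature game: the expansion error is `o(ε²)` as `ε → 0⁺`. -/
theorem statement_5 (γ cγ α₂ δ : ℝ) (hγ₁ : 1/3 < γ) (hγ₂ : γ < 1)
    (hcγ : cγ = (1 - γ) * (2*γ) ^ (γ/(1-γ)))
    (f : ℝ → ℝ) (hf : ∀ s : ℝ, 0 < s → f s = cγ * s ^ (2*γ/(γ-1)))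
    (hα₂ : 0 < α₂) (hα₂' : α₂ < 1/3) (hδ : 0 < δ)
    (ψ : E2 × ℝ → ℝ) (x₀ : E2) (t₀ : ℝ)
    (U : Set (E2 × ℝ)) (hU : U ∈ 𝓝 (x₀, t₀)) (hψ : ContDiffOn ℝ 3 ψ U)
    (v : E2) (hv : ‖v‖ = 1)
    (b β s : ℝ → ℝ)
    (hb : ∀ ε ∈ Ioo (0:ℝ) 1, b ε = 1 ∨ b ε = -1)
    (hβ : ∀ ε ∈ Ioo (0:ℝ) 1, β ε = 1 ∨ β ε = -1)
    (hs : ∀ ε ∈ Ioo (0:ℝ) 1, s ε ∈ Icc δ (ε ^ (-α₂))) :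
    (fun ε : ℝ =>
        ψ (x₀ + (b ε * ε * s ε) • perp v + (β ε * ε^2 * f (s ε)) • v, t₀ + ε^2)
          - ψ (x₀, t₀)
          - ε * b ε * s ε * ⟪gradient (fun y => ψ (y, t₀)) x₀, perp v⟫
          - ε^2 * (deriv (fun τ => ψ (x₀, τ)) t₀
              + β ε * f (s ε) * ⟪gradient (fun y => ψ (y, t₀)) x₀, v⟫
              + s ε ^ 2 / 2 *
                ⟪fderiv ℝ (fun y => gradient (fun z => ψ (z, t₀)) y) x₀ (perp v), perp v⟫))
      =o[𝓝[>] (0:ℝ)] (fun ε => ε^2) := by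
  have hz : (0:ℝ) < 1 - α₂ := by linarith
  have hz3 : (0:ℝ) < 1 - 3*α₂ := by linarith
  set z : E2 × ℝ := (x₀, t₀) with hz_def
  have hψz : ContDiffAt ℝ 3 ψ z := hψ.contDiffAt hU
  set L1 : (E2 × ℝ) →L[ℝ] ℝ := fderiv ℝ ψ z with hL1_def
  set L2 : (E2 × ℝ) →L[ℝ] ((E2 × ℝ) →L[ℝ] ℝ) := fderiv ℝ (fderiv ℝ ψ) z with hL2_def
  have hL1 : HasFDerivAt ψ L1 z := (hψz.differentiableAt (by norm_num)).hasFDerivAt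
  have hL2 : HasFDerivAt (fderiv ℝ ψ) L2 z :=
    ((hψz.fderiv_right (m := 2) (by norm_num)).differentiableAt (by norm_num)).hasFDerivAt
  set J : E2 →L[ℝ] E2 × ℝ := ContinuousLinearMap.inl ℝ E2 ℝ with hJ_def
  -- a neighborhood where ψ is differentiable
  obtain ⟨u, hu_mem, hu⟩ := hψz.contDiffOn le_rfl (by simp)
  obtain ⟨u', hu'sub, hu'open, hzu'⟩ := mem_nhds_iff.mp hu_mem
  have hu' : ContDiffOn ℝ 3 ψ u' := hu.mono hu'sub
  have hdiffψ : ∀ y ∈ u', HasFDerivAt ψ (fderiv ℝ ψ y) y := fun y hy =>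
    ((hu'.differentiableOn (by norm_num)).differentiableAt (hu'open.mem_nhds hy)).hasFDerivAt
  -- gradient identification near x₀
  have hgradEq : ∀ᶠ y in 𝓝 x₀, gradient (fun w => ψ (w, t₀)) y
      = (InnerProductSpace.toDual ℝ E2).symm ((fderiv ℝ ψ (y, t₀)).comp J) := by
    have hcont : Continuous (fun y : E2 => ((y, t₀) : E2 × ℝ)) := by continuity
    have hV : (fun y : E2 => ((y, t₀) : E2 × ℝ)) ⁻¹' u' ∈ 𝓝 x₀ :=
      hcont.continuousAt.preimage_mem_nhds (hu'open.mem_nhds hzu')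
    filter_upwards [hV] with y hy
    have h1 : HasFDerivAt (fun w : E2 => ψ (w, t₀)) ((fderiv ℝ ψ (y, t₀)).comp J) y :=
      (hdiffψ _ hy).comp y (hasFDerivAt_prodMk_left y t₀)
    exact h1.hasGradientAt.gradient
  have hgrad_x₀ : gradient (fun w => ψ (w, t₀)) x₀
      = (InnerProductSpace.toDual ℝ E2).symm (L1.comp J) := hgradEq.self_of_nhds
  have hinner : ∀ w : E2, ⟪gradient (fun y => ψ (y, t₀)) x₀, w⟫ = L1 (w, 0) := by
    intro w
    rw [hgrad_x₀, InnerProductSpace.toDual_symm_apply]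
    simp [hJ_def]
  -- time derivative identification
  have hderiv_t : deriv (fun τ => ψ (x₀, τ)) t₀ = L1 ((0:E2), (1:ℝ)) := by
    have hd : HasDerivAt (fun τ : ℝ => ((x₀, τ) : E2 × ℝ)) (((0:E2), (1:ℝ))) t₀ :=
      (hasDerivAt_const t₀ x₀).prodMk (hasDerivAt_id t₀)
    exact (hL1.comp_hasDerivAt t₀ hd).deriv
  -- Hessian identification
  have hHess : ∀ w : E2, ⟪fderiv ℝ (fun y => gradient (fun w' => ψ (w', t₀)) y) x₀ w, w⟫
      = L2 (w, 0) (w, 0) := by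
    intro w
    have hA : HasFDerivAt (fun y : E2 => fderiv ℝ ψ (y, t₀)) (L2.comp J) x₀ :=
      hL2.comp x₀ (hasFDerivAt_prodMk_left x₀ t₀)
    set Φ : ((E2 × ℝ) →L[ℝ] ℝ) →L[ℝ] (E2 →L[ℝ] ℝ) :=
      (ContinuousLinearMap.compL ℝ E2 (E2 × ℝ) ℝ).flip J with hΦ
    have hB : HasFDerivAt (fun y : E2 => (fderiv ℝ ψ (y, t₀)).comp J)
        (Φ.comp (L2.comp J)) x₀ := by
      have := Φ.hasFDerivAt.comp x₀ hA
      simpa [hΦ, Function.comp_def] using this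
    set T : (E2 →L[ℝ] ℝ) →L[ℝ] E2 :=
      { toFun := fun L => (InnerProductSpace.toDual ℝ E2).symm L
        map_add' := fun a b => map_add _ a b
        map_smul' := fun c L => by simp
        cont := (InnerProductSpace.toDual ℝ E2).symm.continuous } with hT_def
    have hT : ∀ L, T L = (InnerProductSpace.toDual ℝ E2).symm L := fun _ => rfl
    have hC : HasFDerivAt
        (fun y : E2 => (InnerProductSpace.toDual ℝ E2).symm ((fderiv ℝ ψ (y, t₀)).comp J))
        (T.comp (Φ.comp (L2.comp J))) x₀ := by
      have := T.hasFDerivAt.comp x₀ hB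
      simpa [Function.comp_def, hT] using this
    have hfd : fderiv ℝ (fun y => gradient (fun w' => ψ (w', t₀)) y) x₀
        = T.comp (Φ.comp (L2.comp J)) := by
      have h1 : (fun y => gradient (fun w' => ψ (w', t₀)) y) =ᶠ[𝓝 x₀]
          (fun y => (InnerProductSpace.toDual ℝ E2).symm ((fderiv ℝ ψ (y, t₀)).comp J)) :=
        hgradEq
      rw [h1.fderiv_eq]
      exact hC.fderiv
    rw [hfd]
    simp only [ContinuousLinearMap.coe_comp', Function.comp_apply,
      ContinuousLinearMap.flip_apply, ContinuousLinearMap.compL_apply, hΦ, hT]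
    rw [InnerProductSpace.toDual_symm_apply]
    simp [hJ_def]
  -- constants
  have hγ0 : (0:ℝ) < γ := lt_trans (by norm_num) hγ₁
  have hz1 : (0:ℝ) < 1 - α₂ := by linarith
  have hz3 : (0:ℝ) < 1 - 3*α₂ := by linarith
  have hcγpos : 0 < cγ := by
    rw [hcγ]
    have h2γ : (0:ℝ) < 2*γ := by linarith
    exact mul_pos (by linarith) (Real.rpow_pos_of_pos h2γ _)
  have he₀np : 2*γ/(γ-1) ≤ 0 := div_nonpos_of_nonneg_of_nonpos (by linarith) (by linarith)
  set Cf : ℝ := cγ * δ ^ (2*γ/(γ-1)) with hCf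
  have hCfpos : 0 < Cf := by
    rw [hCf]; positivity
  have hfb : ∀ ε ∈ Ioo (0:ℝ) 1, 0 < f (s ε) ∧ f (s ε) ≤ Cf := by
    intro ε hε
    have hsδ := (hs ε hε).1
    have hspos : 0 < s ε := lt_of_lt_of_le hδ hsδ
    rw [hf _ hspos]
    constructor
    · positivity
    · rw [hCf]
      exact mul_le_mul_of_nonneg_left (Real.rpow_le_rpow_of_nonpos hδ hsδ he₀np) hcγpos.le
  have hperp : ‖perp v‖ = 1 := by
    have heq : ‖perp v‖ = ‖v‖ := by
      simp only [perp, EuclideanSpace.norm_eq, WithLp.ofLp_toLp, Fin.sum_univ_two, Matrix.cons_val_zero,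
        Matrix.cons_val_one, Matrix.head_cons, norm_neg]
      rw [add_comm]
    rw [heq, hv]
  -- vectors
  set P : E2 × ℝ := (perp v, (0:ℝ)) with hP
  set Q : E2 × ℝ := (v, (0:ℝ)) with hQ
  set Tv : E2 × ℝ := ((0:E2), (1:ℝ)) with hTvec
  set h : ℝ → E2 × ℝ :=
    fun ε => ((b ε * ε * s ε) • perp v + (β ε * ε^2 * f (s ε)) • v, ε^2) with hh
  have hPnorm : ‖P‖ = 1 := by
    rw [hP, Prod.norm_def]
    simp [hperp]
  have hsplit : ∀ ε : ℝ, h ε = (b ε * ε * s ε) • P + (β ε * ε^2 * f (s ε)) • Q + ε^2 • Tv := by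
    intro ε
    simp only [hh, hP, hQ, hTvec, Prod.smul_mk, Prod.mk_add_mk, Prod.mk.injEq, smul_zero,
      smul_eq_mul, mul_zero, mul_one]
    constructor
    · simp
    · ring
  have hIoo : Ioo (0:ℝ) 1 ∈ 𝓝[>] (0:ℝ) := Ioo_mem_nhdsGT_of_mem (by constructor <;> norm_num)
  -- bounds
  have hba : ∀ ε ∈ Ioo (0:ℝ) 1, |b ε * ε * s ε| ≤ ε ^ (1 - α₂) := by
    intro ε hε
    have hb1 : |b ε| = 1 := by rcases hb ε hε with h' | h' <;> simp [h']
    have hεpos := hε.1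
    have hspos : 0 < s ε := lt_of_lt_of_le hδ (hs ε hε).1
    have habs : |b ε * ε * s ε| = ε * s ε := by
      rw [abs_mul, abs_mul, hb1, one_mul, abs_of_pos hεpos, abs_of_pos hspos]
    rw [habs]
    calc ε * s ε ≤ ε * ε ^ (-α₂) := mul_le_mul_of_nonneg_left (hs ε hε).2 hεpos.le
      _ = ε ^ (1 - α₂) := by
          rw [show (1:ℝ) - α₂ = 1 + (-α₂) by ring, Real.rpow_add hεpos, Real.rpow_one]
  have hε2le : ∀ ε ∈ Ioo (0:ℝ) 1, ε^2 ≤ ε ^ (1 - α₂) := by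
    intro ε hε
    have h2 : ε^2 = ε ^ ((2:ℕ):ℝ) := (Real.rpow_natCast ε 2).symm
    rw [h2]
    exact Real.rpow_le_rpow_of_exponent_ge hε.1 hε.2.le (by push_cast; linarith)
  have hcb : ∀ ε ∈ Ioo (0:ℝ) 1, |β ε * ε^2 * f (s ε)| ≤ Cf * ε^2 := by
    intro ε hε
    have hβ1 : |β ε| = 1 := by rcases hβ ε hε with h' | h' <;> simp [h']
    have hfpos := hfb ε hε
    have habs : |β ε * ε^2 * f (s ε)| = ε^2 * f (s ε) := by
      rw [abs_mul, abs_mul, hβ1, one_mul, abs_of_pos (pow_pos hε.1 2), abs_of_pos hfpos.1]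
    rw [habs]
    calc ε^2 * f (s ε) ≤ ε^2 * Cf :=
          mul_le_mul_of_nonneg_left hfpos.2 (pow_pos hε.1 2).le
      _ = Cf * ε^2 := mul_comm _ _
  have hhnorm : ∀ ε ∈ Ioo (0:ℝ) 1, ‖h ε‖ ≤ (2 + Cf) * ε ^ (1 - α₂) := by
    intro ε hε
    have hrp : (0:ℝ) ≤ ε ^ (1-α₂) := Real.rpow_nonneg hε.1.le _
    have h1 : ‖(b ε * ε * s ε) • perp v + (β ε * ε^2 * f (s ε)) • v‖
        ≤ |b ε * ε * s ε| + |β ε * ε^2 * f (s ε)| := by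
      calc ‖(b ε * ε * s ε) • perp v + (β ε * ε^2 * f (s ε)) • v‖
          ≤ ‖(b ε * ε * s ε) • perp v‖ + ‖(β ε * ε^2 * f (s ε)) • v‖ := norm_add_le _ _
        _ = |b ε * ε * s ε| + |β ε * ε^2 * f (s ε)| := by
            rw [norm_smul, norm_smul, hperp, hv, Real.norm_eq_abs, Real.norm_eq_abs,
              mul_one, mul_one]
    simp only [hh, Prod.norm_def]
    apply max_le
    · calc ‖(b ε * ε * s ε) • perp v + (β ε * ε^2 * f (s ε)) • v‖
          ≤ |b ε * ε * s ε| + |β ε * ε^2 * f (s ε)| := h1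
        _ ≤ ε^(1-α₂) + Cf * ε^2 := add_le_add (hba ε hε) (hcb ε hε)
        _ ≤ ε^(1-α₂) + Cf * ε^(1-α₂) :=
            add_le_add le_rfl (mul_le_mul_of_nonneg_left (hε2le ε hε) hCfpos.le)
        _ = (1+Cf) * ε^(1-α₂) := by ring
        _ ≤ (2+Cf) * ε^(1-α₂) := mul_le_mul_of_nonneg_right (by linarith) hrp
    · calc ‖ε^2‖ = ε^2 := by rw [Real.norm_eq_abs, abs_of_nonneg (pow_pos hε.1 2).le]
        _ ≤ ε^(1-α₂) := hε2le ε hε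
        _ ≤ (2+Cf)*ε^(1-α₂) := le_mul_of_one_le_left hrp (by linarith)
  have hD : ∀ ε ∈ Ioo (0:ℝ) 1,
      ‖h ε - (b ε * ε * s ε) • P‖ ≤ (1 + Cf) * ε^2 := by
    intro ε hε
    have hdecomp : h ε - (b ε * ε * s ε) • P = ((β ε * ε^2 * f (s ε)) • v, ε^2) := by
      simp only [hh, hP, Prod.smul_mk, smul_zero, Prod.mk_sub_mk, Prod.mk.injEq, sub_zero]
      constructor
      · abel
      · trivial
    rw [hdecomp, Prod.norm_def]
    apply max_le
    · rw [norm_smul, hv, Real.norm_eq_abs, mul_one]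
      calc |β ε * ε^2 * f (s ε)| ≤ Cf * ε^2 := hcb ε hε
        _ ≤ (1+Cf) * ε^2 := mul_le_mul_of_nonneg_right (by linarith) (pow_pos hε.1 2).le
    · rw [Real.norm_eq_abs, abs_of_nonneg (pow_pos hε.1 2).le]
      exact le_mul_of_one_le_left (pow_pos hε.1 2).le (by linarith)
  -- tendsto facts
  have hrpow_tendsto : ∀ q : ℝ, 0 < q →
      Tendsto (fun ε : ℝ => ε ^ q) (𝓝[>] (0:ℝ)) (𝓝 0) := by
    intro q hq
    have hc : ContinuousAt (fun x : ℝ => x ^ q) 0 :=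
      Real.continuousAt_rpow_const 0 q (Or.inr hq.le)
    have h2 := hc.tendsto
    rw [Real.zero_rpow hq.ne'] at h2
    exact h2.mono_left nhdsWithin_le_nhds
  have hlo : ∀ q : ℝ, 0 < q →
      (fun ε : ℝ => ε^2 * ε ^ q) =o[𝓝[>] (0:ℝ)] (fun ε => ε^2) := by
    intro q hq
    have h1 : (fun ε : ℝ => ε ^ q) =o[𝓝[>] (0:ℝ)] (fun _ => (1:ℝ)) :=
      (Asymptotics.isLittleO_one_iff ℝ).mpr (hrpow_tendsto q hq)
    simpa using (Asymptotics.isBigO_refl (fun ε : ℝ => ε^2) (𝓝[>] (0:ℝ))).mul_isLittleO h1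
  have htendh : Tendsto h (𝓝[>] (0:ℝ)) (𝓝 0) := by
    refine squeeze_zero_norm' (a := fun ε => (2+Cf) * ε ^ (1-α₂)) ?_ ?_
    · filter_upwards [hIoo] with ε hε
      exact hhnorm ε hε
    · have := (hrpow_tendsto (1-α₂) hz1).const_mul (2+Cf)
      simpa using this
  -- Taylor remainder
  have hRh : (fun ε => ψ (z + h ε) - ψ z - L1 (h ε) - (1/2) * L2 (h ε) (h ε))
      =O[𝓝[>] (0:ℝ)] (fun ε => ‖h ε‖^3) :=
    (taylor_two_isBigO ψ z hψz).comp_tendsto htendh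
  have hE1 : (fun ε => ψ (z + h ε) - ψ z - L1 (h ε) - (1/2) * L2 (h ε) (h ε))
      =O[𝓝[>] (0:ℝ)] (fun ε : ℝ => ε^2 * ε ^ (1-3*α₂)) := by
    refine hRh.trans (Asymptotics.IsBigO.of_bound ((2+Cf)^3) ?_)
    filter_upwards [hIoo] with ε hε
    have hεpos := hε.1
    have h1 : ‖h ε‖ ≤ (2+Cf) * ε^(1-α₂) := hhnorm ε hε
    have h3 : (ε^((1:ℝ)-α₂))^3 = ε^2 * ε^(1-3*α₂) := by
      rw [← Real.rpow_natCast (ε^((1:ℝ)-α₂)) 3, ← Real.rpow_mul hεpos.le]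
      rw [show ((1:ℝ)-α₂) * ((3:ℕ):ℝ) = 2 + (1-3*α₂) by push_cast; ring,
        Real.rpow_add hεpos]
      congr 1
      exact Real.rpow_natCast ε 2 ▸ by norm_num
    have h2 : ‖h ε‖^3 ≤ (2+Cf)^3 * (ε^2 * ε^(1-3*α₂)) := by
      calc ‖h ε‖^3 ≤ ((2+Cf) * ε^((1:ℝ)-α₂))^3 := by
            exact pow_le_pow_left₀ (norm_nonneg _) h1 3
        _ = (2+Cf)^3 * (ε^((1:ℝ)-α₂))^3 := by rw [mul_pow]
        _ = (2+Cf)^3 * (ε^2 * ε^(1-3*α₂)) := by rw [h3]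
    have hnn : (0:ℝ) ≤ ε^2 * ε^(1-3*α₂) := by positivity
    rw [Real.norm_of_nonneg (by positivity : (0:ℝ) ≤ ‖h ε‖^3),
      Real.norm_of_nonneg hnn]
    exact h2
  -- cross terms
  have hE2 : (fun ε => (1/2) * (L2 (h ε) (h ε)
        - L2 ((b ε * ε * s ε) • P) ((b ε * ε * s ε) • P)))
      =O[𝓝[>] (0:ℝ)] (fun ε : ℝ => ε^2 * ε ^ (1-α₂)) := by
    refine Asymptotics.IsBigO.of_bound (‖L2‖ * ((1+Cf) * (3+Cf))) ?_
    filter_upwards [hIoo] with ε hε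
    have hεpos := hε.1
    have hrp : (0:ℝ) ≤ ε ^ (1-α₂) := Real.rpow_nonneg hεpos.le _
    set D := h ε - (b ε * ε * s ε) • P with hDdef
    have hdec : L2 (h ε) (h ε) - L2 ((b ε * ε * s ε) • P) ((b ε * ε * s ε) • P)
        = L2 (h ε) D + L2 D ((b ε * ε * s ε) • P) := by
      rw [hDdef]
      simp only [map_sub, ContinuousLinearMap.sub_apply]
      ring
    have hDb : ‖D‖ ≤ (1+Cf) * ε^2 := hD ε hε
    have hhb : ‖h ε‖ ≤ (2+Cf) * ε^(1-α₂) := hhnorm ε hε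
    have hab : ‖(b ε * ε * s ε) • P‖ ≤ ε^(1-α₂) := by
      rw [norm_smul, hPnorm, mul_one, Real.norm_eq_abs]
      exact hba ε hε
    have hb1 : ‖L2 (h ε) D‖ ≤ ‖L2‖ * ((2+Cf) * ε^(1-α₂)) * ((1+Cf) * ε^2) := by
      calc ‖L2 (h ε) D‖ ≤ ‖L2‖ * ‖h ε‖ * ‖D‖ := L2.le_opNorm₂ _ _
        _ ≤ ‖L2‖ * ((2+Cf) * ε^(1-α₂)) * ((1+Cf) * ε^2) :=
            mul_le_mul (mul_le_mul_of_nonneg_left hhb (norm_nonneg L2)) hDb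
              (norm_nonneg D) (by positivity)
    have hb2' : ‖L2 D ((b ε * ε * s ε) • P)‖ ≤ ‖L2‖ * ((1+Cf) * ε^2) * (ε^(1-α₂)) := by
      calc ‖L2 D ((b ε * ε * s ε) • P)‖ ≤ ‖L2‖ * ‖D‖ * ‖(b ε * ε * s ε) • P‖ :=
            L2.le_opNorm₂ _ _
        _ ≤ ‖L2‖ * ((1+Cf) * ε^2) * (ε^(1-α₂)) :=
            mul_le_mul (mul_le_mul_of_nonneg_left hDb (norm_nonneg L2)) hab
              (norm_nonneg _) (by positivity)
    have hnn : (0:ℝ) ≤ ε^2 * ε^(1-α₂) := by positivity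
    rw [Real.norm_of_nonneg hnn, Real.norm_eq_abs]
    calc |(1/2) * (L2 (h ε) (h ε) - L2 ((b ε * ε * s ε) • P) ((b ε * ε * s ε) • P))|
        ≤ |L2 (h ε) (h ε) - L2 ((b ε * ε * s ε) • P) ((b ε * ε * s ε) • P)| := by
          rw [abs_mul, abs_of_pos (by norm_num : (0:ℝ) < 1/2)]
          linarith [abs_nonneg (L2 (h ε) (h ε)
            - L2 ((b ε * ε * s ε) • P) ((b ε * ε * s ε) • P))]
      _ = |L2 (h ε) D + L2 D ((b ε * ε * s ε) • P)| := by rw [hdec]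
      _ ≤ |L2 (h ε) D| + |L2 D ((b ε * ε * s ε) • P)| := abs_add_le _ _
      _ ≤ ‖L2‖ * ((2+Cf) * ε^(1-α₂)) * ((1+Cf) * ε^2)
          + ‖L2‖ * ((1+Cf) * ε^2) * (ε^(1-α₂)) := by
          exact add_le_add hb1 hb2'
      _ = ‖L2‖ * ((1+Cf) * (3+Cf)) * (ε^2 * ε^(1-α₂)) := by ring
  -- eventual identity
  have hEq : ∀ᶠ ε in 𝓝[>] (0:ℝ),
      (ψ (x₀ + (b ε * ε * s ε) • perp v + (β ε * ε^2 * f (s ε)) • v, t₀ + ε^2)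
          - ψ z
          - ε * b ε * s ε * ⟪gradient (fun y => ψ (y, t₀)) x₀, perp v⟫
          - ε^2 * (deriv (fun τ => ψ (x₀, τ)) t₀
              + β ε * f (s ε) * ⟪gradient (fun y => ψ (y, t₀)) x₀, v⟫
              + s ε ^ 2 / 2 *
                ⟪fderiv ℝ (fun y => gradient (fun z => ψ (z, t₀)) y) x₀ (perp v), perp v⟫))
      = (ψ (z + h ε) - ψ z - L1 (h ε) - (1/2) * L2 (h ε) (h ε))
        + (1/2) * (L2 (h ε) (h ε)
            - L2 ((b ε * ε * s ε) • P) ((b ε * ε * s ε) • P)) := by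
    filter_upwards [hIoo] with ε hε
    have hb2 : b ε ^ 2 = 1 := by rcases hb ε hε with h' | h' <;> rw [h'] <;> norm_num
    have harg : (x₀ + (b ε * ε * s ε) • perp v + (β ε * ε^2 * f (s ε)) • v, t₀ + ε^2)
        = z + h ε := by
      simp only [hz_def, hh, Prod.mk_add_mk, Prod.mk.injEq]
      constructor
      · abel
      · trivial
    have hL1h : L1 (h ε) = (b ε * ε * s ε) * L1 P + (β ε * ε^2 * f (s ε)) * L1 Q
        + ε^2 * L1 Tv := by
      rw [hsplit]
      simp [map_add, map_smul]
    have hL2a : L2 ((b ε * ε * s ε) • P) ((b ε * ε * s ε) • P)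
        = (ε^2 * s ε^2) * L2 P P := by
      simp only [map_smul, ContinuousLinearMap.smul_apply, smul_eq_mul]
      linear_combination (ε^2 * s ε^2 * (L2 P P)) * hb2
    rw [harg, hinner (perp v), hinner v, hderiv_t, hHess (perp v)]
    rw [hL1h, hL2a]
    rw [hP, hQ, hTvec]
    ring
  -- conclusion
  have hsum : (fun ε => (ψ (z + h ε) - ψ z - L1 (h ε) - (1/2) * L2 (h ε) (h ε))
      + (1/2) * (L2 (h ε) (h ε) - L2 ((b ε * ε * s ε) • P) ((b ε * ε * s ε) • P)))
      =o[𝓝[>] (0:ℝ)] (fun ε => ε^2) :=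
    (hE1.trans_isLittleO (hlo _ hz3)).add (hE2.trans_isLittleO (hlo _ hz1))
  exact hsum.congr' (Filter.EventuallyEq.symm hEq) EventuallyEq.rfl
end
end

section
/- Let 1/3 < γ < 1, c_γ = (1−γ)·(2γ)^{γ/(1−γ)}, f(s) = c_γ·s^{2γ/(γ−1)}, φ_s(κ) = κ·s²/2 − f(s), and let α₁, α₂ > 0. For all real a ≤ b < 0 there exists ε₀ > 0 such that for every ε ∈ (0, ε₀) and every κ ∈ [a, b], the maximum of s ↦ φ_s(κ) over the interval I_ε = [ε^{α₁}, ε^{−α₂}] is attained and equals −|κ|^γ. -/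
open Set

/-- For all `a ≤ b < 0` there exists `ε₀ > 0` such that for every
`ε ∈ (0, ε₀)` and every `κ ∈ [a, b]`, the maximum of `s ↦ φ_s(κ)` over
`I_ε = [ε^{α₁}, ε^{−α₂}]` is attained and equals `−|κ|^γ`. -/
theorem statement_6 (γ cγ α₁ α₂ : ℝ) (hγ₁ : 1/3 < γ) (hγ₂ : γ < 1)
    (hcγ : cγ = (1 - γ) * (2*γ) ^ (γ/(1-γ)))
    (f : ℝ → ℝ) (hf : ∀ s : ℝ, 0 < s → f s = cγ * s ^ (2*γ/(γ-1)))
    (φ : ℝ → ℝ → ℝ) (hφ : ∀ s κ : ℝ, φ s κ = κ * s^2 / 2 - f s)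
    (hα₁ : 0 < α₁) (hα₂ : 0 < α₂)
    (a b : ℝ) (hab : a ≤ b) (hb : b < 0) :
    ∃ ε₀ > (0:ℝ), ∀ ε : ℝ, 0 < ε → ε < ε₀ → ∀ κ ∈ Icc a b,
      ∃ s ∈ Icc (ε ^ α₁) (ε ^ (-α₂)),
        (∀ s' ∈ Icc (ε ^ α₁) (ε ^ (-α₂)), φ s' κ ≤ φ s κ) ∧
        φ s κ = -|κ| ^ γ := by
  have hγ0 : (0:ℝ) < γ := by linarith
  have h1γ : (0:ℝ) < 1 - γ := by linarith
  have h2γ : (0:ℝ) < 2*γ := by linarith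
  have hγ1 : γ - 1 ≠ 0 := by intro h; linarith
  have h1γ' : (1:ℝ) - γ ≠ 0 := h1γ.ne'
  have hbpos : 0 < |b| := abs_pos.mpr hb.ne
  have hapos : 0 < |a| := abs_pos.mpr (by linarith : a < 0).ne
  -- maximizer as a function of |κ|
  set S : ℝ → ℝ := fun k => (2*γ * k ^ (γ-1)) ^ ((1:ℝ)/2) with hS
  have hSpos : ∀ k : ℝ, 0 < k → 0 < S k := fun k hk =>
    Real.rpow_pos_of_pos (mul_pos h2γ (Real.rpow_pos_of_pos hk _)) _
  have hSmono : ∀ x y : ℝ, 0 < x → x ≤ y → S y ≤ S x := by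
    intro x y hx hxy
    simp only [hS]
    exact Real.rpow_le_rpow
      (mul_pos h2γ (Real.rpow_pos_of_pos (hx.trans_le hxy) _)).le
      (mul_le_mul_of_nonneg_left
        (Real.rpow_le_rpow_of_nonpos hx hxy (by linarith)) h2γ.le)
      (by norm_num)
  set m := S |a| with hm
  set M := S |b| with hM
  have hmpos : 0 < m := hSpos _ hapos
  have hMpos : 0 < M := hSpos _ hbpos
  refine ⟨min (m ^ α₁⁻¹) (M ^ (-α₂⁻¹)), lt_min (Real.rpow_pos_of_pos hmpos _)
    (Real.rpow_pos_of_pos hMpos _), ?_⟩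
  intro ε hε hε₀ κ hκ
  have hκb : κ ≤ b := hκ.2
  have hκneg : κ < 0 := lt_of_le_of_lt hκb hb
  set k := |κ| with hk
  have hkpos : 0 < k := abs_pos.mpr hκneg.ne
  have hκk : κ = -k := by rw [hk, abs_of_neg hκneg]; ring
  have hbk : |b| ≤ k := by rw [hk, abs_of_neg hb, abs_of_neg hκneg]; linarith
  have hka : k ≤ |a| := by
    rw [hk, abs_of_neg (by linarith : a < (0:ℝ)), abs_of_neg hκneg]; linarith [hκ.1]
  -- bounds on the interval
  have hlow : ε ^ α₁ ≤ S k := by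
    have h1 : ε ^ α₁ < (m ^ α₁⁻¹) ^ α₁ :=
      Real.rpow_lt_rpow hε.le (lt_of_lt_of_le hε₀ (min_le_left _ _)) hα₁
    have h2 : (m ^ α₁⁻¹) ^ α₁ = m := by
      rw [← Real.rpow_mul hmpos.le, inv_mul_cancel₀ hα₁.ne', Real.rpow_one]
    have h3 : m ≤ S k := hSmono k |a| hkpos hka
    linarith
  have hhigh : S k ≤ ε ^ (-α₂) := by
    have h1 : (M ^ (-α₂⁻¹)) ^ (-α₂) < ε ^ (-α₂) :=
      Real.rpow_lt_rpow_of_neg hε (lt_of_lt_of_le hε₀ (min_le_right _ _))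
        (by linarith)
    have h2 : (M ^ (-α₂⁻¹)) ^ (-α₂) = M := by
      rw [← Real.rpow_mul hMpos.le]
      rw [show -α₂⁻¹ * -α₂ = α₂⁻¹ * α₂ by ring, inv_mul_cancel₀ hα₂.ne',
        Real.rpow_one]
    have h3 : S k ≤ M := hSmono |b| k hbpos hbk
    linarith
  set s := S k with hsdef
  have hspos : 0 < s := hSpos _ hkpos
  have hXpos : (0:ℝ) < 2*γ * k ^ (γ-1) := by positivity
  -- key power identities
  have hs2 : s^2 = 2*γ * k ^ (γ-1) := by
    rw [hsdef, hS]
    rw [← Real.rpow_natCast ((2*γ * k ^ (γ-1)) ^ ((1:ℝ)/2)) 2,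
      ← Real.rpow_mul hXpos.le]
    norm_num
  have hk1 : k * k ^ (γ-1) = k ^ γ := by
    have h := Real.rpow_add hkpos 1 (γ-1)
    rw [Real.rpow_one] at h
    rw [← h]; ring_nf
  have hκs2 : κ * s^2 / 2 = -(γ * k ^ γ) := by
    rw [hs2, hκk, ← hk1]; ring
  have hsb : s ^ (2*γ/(γ-1)) = (2*γ) ^ (γ/(γ-1)) * k ^ γ := by
    rw [hsdef, hS, ← Real.rpow_mul hXpos.le,
      show (1:ℝ)/2 * (2*γ/(γ-1)) = γ/(γ-1) by field_simp,
      Real.mul_rpow h2γ.le (Real.rpow_nonneg hkpos.le _),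
      ← Real.rpow_mul hkpos.le, mul_div_cancel₀ γ hγ1]
  have hfs : f s = (1-γ) * k ^ γ := by
    rw [hf s hspos, hcγ, hsb]
    rw [show (1 - γ) * (2*γ) ^ (γ/(1-γ)) * ((2*γ) ^ (γ/(γ-1)) * k ^ γ)
        = (1 - γ) * ((2*γ) ^ (γ/(1-γ)) * (2*γ) ^ (γ/(γ-1))) * k ^ γ by ring,
      ← Real.rpow_add h2γ,
      show γ/(1-γ) + γ/(γ-1) = 0 by field_simp; ring, Real.rpow_zero, mul_one]
  have hφs : φ s κ = -k ^ γ := by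
    rw [hφ, hκs2, hfs]; ring
  refine ⟨s, ⟨hlow, hhigh⟩, ?_, hφs⟩
  -- maximality via weighted AM-GM
  intro s' hs'
  have hs'pos : 0 < s' := lt_of_lt_of_le (Real.rpow_pos_of_pos hε _) hs'.1
  rw [hφs, hφ, hf s' hs'pos, hκk]
  have key : k ^ γ ≤ k * s'^2 / 2 + cγ * s' ^ (2*γ/(γ-1)) := by
    set p₁ := k * s'^2 / (2*γ) with hp₁
    set p₂ := (2*γ) ^ (γ/(1-γ)) * s' ^ (2*γ/(γ-1)) with hp₂
    have hp₁pos : 0 < p₁ := by positivity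
    have hp₂pos : 0 < p₂ := by positivity
    have amgm := Real.geom_mean_le_arith_mean2_weighted hγ0.le h1γ.le
      hp₁pos.le hp₂pos.le (by ring)
    have hLHS : p₁ ^ γ * p₂ ^ (1-γ) = k ^ γ := by
      have e1 : p₁ ^ γ = (k / (2*γ)) ^ γ * s' ^ (2*γ) := by
        rw [hp₁, show k * s'^2 / (2*γ) = (k/(2*γ)) * s'^2 by ring,
          ← Real.rpow_natCast s' 2,
          Real.mul_rpow (by positivity) (Real.rpow_nonneg hs'pos.le _),
          ← Real.rpow_mul hs'pos.le]
        norm_num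
      have e2 : p₂ ^ (1-γ) = (2*γ) ^ γ * s' ^ (-(2*γ)) := by
        rw [hp₂, Real.mul_rpow (Real.rpow_nonneg h2γ.le _)
            (Real.rpow_nonneg hs'pos.le _),
          ← Real.rpow_mul h2γ.le, ← Real.rpow_mul hs'pos.le,
          show γ/(1-γ) * (1-γ) = γ by field_simp,
          show 2*γ/(γ-1) * (1-γ) = -(2*γ) by field_simp <;> ring]
      rw [e1, e2,
        show (k / (2*γ)) ^ γ * s' ^ (2*γ) * ((2*γ) ^ γ * s' ^ (-(2*γ)))
          = ((k / (2*γ)) ^ γ * (2*γ) ^ γ) * (s' ^ (2*γ) * s' ^ (-(2*γ))) by ring,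
        ← Real.mul_rpow (by positivity) h2γ.le,
        ← Real.rpow_add hs'pos, div_mul_cancel₀ k h2γ.ne']
      simp
    have hRHS : γ * p₁ + (1-γ) * p₂ = k * s'^2 / 2 + cγ * s' ^ (2*γ/(γ-1)) := by
      rw [hp₁, hp₂, hcγ]; field_simp
    rw [hLHS, hRHS] at amgm
    exact amgm
  linarith
end

section
/- Let 1/3 < γ < 1, c_γ = (1−γ)·(2γ)^{γ/(1−γ)}, f(s) = c_γ·s^{2γ/(γ−1)}, φ_s(κ) = κ·s²/2 − f(s), let Φ(κ) = −|κ|^γ for κ ≤ 0 and Φ(κ) = 0 for κ > 0, and suppose α₁, α₂ satisfy (1−γ)/(2γ) < α₁ < min(1, (1−γ)/γ) and 0 < α₂ < min(2γα₁/(1−γ) − 1, 1/3). Then for every κ ∈ ℝ, inf_{s ∈ I_ε} |φ_s(κ) − Φ(κ)| → 0 as ε → 0⁺, where I_ε = [ε^{α₁}, ε^{−α₂}]; moreover, for every κ ≤ 0 and every s > 0 one has φ_s(κ) ≤ Φ(κ). -/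
open Set Filter
open scoped Topology

private lemma sq_rpow (x : ℝ) (hx : 0 ≤ x) (y : ℝ) : (x ^ y) ^ 2 = x ^ (y * 2) := by
  rw [← Real.rpow_natCast (x ^ y) 2, ← Real.rpow_mul hx]
  norm_num

/-- Key AM-GM inequality: for κ < 0 and s > 0,
`(-κ)^γ ≤ -κ * s^2 / 2 + cγ * s^(2γ/(γ-1))`. -/
private lemma amgm_ineq (γ : ℝ) (hγ0 : 0 < γ) (hγ₂ : γ < 1) (κ s : ℝ) (hκ : κ < 0)
    (hs : 0 < s) :
    (-κ) ^ γ ≤ -κ * s ^ 2 / 2 +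
      ((1 - γ) * (2*γ) ^ (γ/(1-γ))) * s ^ (2*γ/(γ-1)) := by
  have h1γ : 0 < 1 - γ := by linarith
  have h2γ : (0:ℝ) < 2 * γ := by linarith
  have hκ' : 0 < -κ := by linarith
  have hγ1ne : γ - 1 ≠ 0 := by intro h; linarith
  have h1γne : 1 - γ ≠ 0 := ne_of_gt h1γ
  set a : ℝ := -κ * s ^ 2 / (2*γ) with ha_def
  set b : ℝ := (2*γ) ^ (γ/(1-γ)) * s ^ (2*γ/(γ-1)) with hb_def
  have ha : 0 ≤ a := by positivity
  have hb : 0 ≤ b := by positivity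
  have hgm : a ^ γ * b ^ (1-γ) ≤ γ * a + (1-γ) * b :=
    Real.geom_mean_le_arith_mean2_weighted hγ0.le h1γ.le ha hb (by ring)
  have hprod : a ^ γ * b ^ (1-γ) = (-κ) ^ γ := by
    have haγ : a ^ γ = (-κ) ^ γ * s ^ (2*γ) * ((2*γ) ^ γ)⁻¹ := by
      rw [ha_def, div_eq_mul_inv, Real.mul_rpow (by positivity) (by positivity),
        Real.mul_rpow hκ'.le (by positivity), ← Real.inv_rpow h2γ.le,
        ← Real.rpow_natCast s 2, ← Real.rpow_mul hs.le]
      norm_num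
    have hbγ : b ^ (1-γ) = (2*γ) ^ γ * s ^ (-(2*γ)) := by
      rw [hb_def, Real.mul_rpow (by positivity) (by positivity),
        ← Real.rpow_mul h2γ.le, ← Real.rpow_mul hs.le]
      congr 1
      · congr 1
        field_simp
      · congr 1
        field_simp [hγ1ne]
        ring
    rw [haγ, hbγ]
    have hs2 : s ^ (2*γ) * s ^ (-(2*γ)) = 1 := by
      rw [← Real.rpow_add hs]; norm_num
    have h2γne : ((2*γ):ℝ) ^ γ ≠ 0 := by positivity
    have hre : (-κ) ^ γ * s ^ (2*γ) * ((2*γ) ^ γ)⁻¹ * ((2*γ) ^ γ * s ^ (-(2*γ)))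
        = (-κ) ^ γ * (s ^ (2*γ) * s ^ (-(2*γ))) * (((2*γ) ^ γ)⁻¹ * (2*γ) ^ γ) := by
      ring
    rw [hre, hs2, inv_mul_cancel₀ h2γne, mul_one, mul_one]
  have hγa : γ * a = -κ * s ^ 2 / 2 := by
    rw [ha_def]; field_simp
  have hγb : (1-γ) * b = ((1 - γ) * (2*γ) ^ (γ/(1-γ))) * s ^ (2*γ/(γ-1)) := by
    rw [hb_def]; ring
  calc (-κ) ^ γ = a ^ γ * b ^ (1-γ) := hprod.symm
    _ ≤ γ * a + (1-γ) * b := hgm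
    _ = _ := by rw [hγa, hγb]

/-- With `Φ(κ) = −|κ|^γ` for `κ ≤ 0` and `Φ(κ) = 0` for `κ > 0`, and α₁, α₂
satisfying the parameter conditions of the curvature game, for every `κ ∈ ℝ` we have
`inf_{s ∈ I_ε} |φ_s(κ) − Φ(κ)| → 0` as `ε → 0⁺`; moreover for every `κ ≤ 0` and every
`s > 0` one has `φ_s(κ) ≤ Φ(κ)`. -/
theorem statement_8 (γ cγ α₁ α₂ : ℝ) (hγ₁ : 1/3 < γ) (hγ₂ : γ < 1)
    (hcγ : cγ = (1 - γ) * (2*γ) ^ (γ/(1-γ)))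
    (f : ℝ → ℝ) (hf : ∀ s : ℝ, 0 < s → f s = cγ * s ^ (2*γ/(γ-1)))
    (φ : ℝ → ℝ → ℝ) (hφ : ∀ s κ : ℝ, φ s κ = κ * s^2 / 2 - f s)
    (Φ : ℝ → ℝ) (hΦ₁ : ∀ κ : ℝ, κ ≤ 0 → Φ κ = -|κ| ^ γ) (hΦ₂ : ∀ κ : ℝ, 0 < κ → Φ κ = 0)
    (hα₁ : (1-γ)/(2*γ) < α₁) (hα₁' : α₁ < min 1 ((1-γ)/γ))
    (hα₂ : 0 < α₂) (hα₂' : α₂ < min (2*γ*α₁/(1-γ) - 1) (1/3)) :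
    (∀ κ : ℝ, Tendsto
        (fun ε : ℝ => sInf ((fun s => |φ s κ - Φ κ|) '' Icc (ε ^ α₁) (ε ^ (-α₂))))
        (𝓝[>] (0:ℝ)) (𝓝 0)) ∧
    ∀ κ : ℝ, κ ≤ 0 → ∀ s : ℝ, 0 < s → φ s κ ≤ Φ κ := by
  have hγ0 : 0 < γ := by linarith
  have h1γ : 0 < 1 - γ := by linarith
  have h2γ : (0:ℝ) < 2 * γ := by linarith
  have hγne : γ ≠ 0 := ne_of_gt hγ0
  have hcγpos : 0 < cγ := by rw [hcγ]; positivity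
  have hα₁pos : 0 < α₁ := lt_trans (by positivity) hα₁
  -- Part 2: the inequality
  have key : ∀ κ : ℝ, κ ≤ 0 → ∀ s : ℝ, 0 < s → φ s κ ≤ Φ κ := by
    intro κ hκ s hs
    rw [hφ, hf s hs, hΦ₁ κ hκ]
    rcases eq_or_lt_of_le hκ with h0 | hneg
    · subst h0
      rw [abs_zero, Real.zero_rpow hγne]
      have : 0 < cγ * s ^ (2*γ/(γ-1)) := by positivity
      nlinarith
    · rw [abs_of_neg hneg, hcγ]
      have := amgm_ineq γ hγ0 hγ₂ κ s hneg hs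
      linarith
  refine ⟨?_, key⟩
  -- existence of a point where φ s κ = Φ κ, for κ ≠ 0
  have exist_root : ∀ κ : ℝ, κ ≠ 0 → ∃ s : ℝ, 0 < s ∧ φ s κ = Φ κ := by
    intro κ hκne
    rcases lt_or_gt_of_ne hκne with hneg | hpos
    · -- κ < 0 : s* = (2γ)^(1/2) * (-κ)^((γ-1)/2)
      have hκ' : 0 < -κ := by linarith
      refine ⟨(2*γ) ^ ((1:ℝ)/2) * (-κ) ^ ((γ-1)/2), by positivity, ?_⟩
      rw [hφ, hΦ₁ κ hneg.le, abs_of_neg hneg]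
      have hbase : 0 < (2*γ) ^ ((1:ℝ)/2) * (-κ) ^ ((γ-1)/2) := by positivity
      have hsq : ((2*γ) ^ ((1:ℝ)/2) * (-κ) ^ ((γ-1)/2)) ^ 2
          = (2*γ) * (-κ) ^ (γ-1) := by
        rw [mul_pow, sq_rpow _ h2γ.le, sq_rpow _ hκ'.le]
        norm_num
      have hpow : ((2*γ) ^ ((1:ℝ)/2) * (-κ) ^ ((γ-1)/2)) ^ (2*γ/(γ-1))
          = (2*γ) ^ (γ/(γ-1)) * (-κ) ^ γ := by
        rw [Real.mul_rpow (by positivity) (by positivity),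
          ← Real.rpow_mul h2γ.le, ← Real.rpow_mul hκ'.le]
        have hγ1ne : γ - 1 ≠ 0 := by intro h; linarith
        have e1 : (1:ℝ)/2 * (2*γ/(γ-1)) = γ/(γ-1) := by field_simp [hγ1ne]
        have e2 : (γ-1)/2 * (2*γ/(γ-1)) = γ := by field_simp [hγ1ne]
        rw [e1, e2]
      rw [hf _ hbase, hsq, hpow, hcγ]
      have hc2 : (2*γ) ^ (γ/(1-γ)) * (2*γ) ^ (γ/(γ-1)) = 1 := by
        rw [← Real.rpow_add h2γ]
        have : γ/(1-γ) + γ/(γ-1) = 0 := by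
          have hγ1ne : γ - 1 ≠ 0 := by intro h; linarith
          have hγ1ne : γ - 1 ≠ 0 := by intro h; linarith
          field_simp [hγ1ne]
          ring
        rw [this, Real.rpow_zero]
      have hκpow : κ * ((2*γ) * (-κ) ^ (γ-1)) / 2 = -(γ * (-κ) ^ γ) := by
        have h : (-κ) * (-κ) ^ (γ-1) = (-κ) ^ γ := by
          nth_rewrite 1 [← Real.rpow_one (-κ)]
          rw [← Real.rpow_add hκ']
          congr 1; ring
        linear_combination (-γ) * h
      rw [hκpow]
      have hfval : (1 - γ) * (2*γ) ^ (γ/(1-γ)) * ((2*γ) ^ (γ/(γ-1)) * (-κ) ^ γ)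
          = (1 - γ) * (-κ) ^ γ := by
        rw [mul_assoc (1-γ), ← mul_assoc ((2*γ) ^ (γ/(1-γ))), hc2, one_mul]
      rw [hfval]; ring
    · -- κ > 0 : s₀ = (2cγ/κ)^((1-γ)/2)
      have hq : (0:ℝ) < 2*cγ/κ := by positivity
      refine ⟨(2*cγ/κ) ^ ((1-γ)/2), by positivity, ?_⟩
      rw [hφ, hΦ₂ κ hpos]
      have hbase : (0:ℝ) < (2*cγ/κ) ^ ((1-γ)/2) := by positivity
      have hsq : ((2*cγ/κ) ^ ((1-γ)/2)) ^ 2 = (2*cγ/κ) ^ (1-γ) := by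
        rw [sq_rpow _ hq.le]; norm_num
      have hpow : ((2*cγ/κ) ^ ((1-γ)/2)) ^ (2*γ/(γ-1)) = (2*cγ/κ) ^ (-γ) := by
        rw [← Real.rpow_mul hq.le]
        congr 1
        have hγ1ne : γ - 1 ≠ 0 := by intro h; linarith
        field_simp; ring
      rw [hf _ hbase, hsq, hpow]
      have h1 : (2*cγ/κ) ^ (1-γ) = (2*cγ/κ) * (2*cγ/κ) ^ (-γ) := by
        rw [show (1:ℝ)-γ = 1 + -γ by ring, Real.rpow_add hq, Real.rpow_one]
      rw [h1]
      field_simp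
      ring
  -- the two basic tendsto facts
  have hlow : Tendsto (fun ε : ℝ => ε ^ α₁) (𝓝[>] (0:ℝ)) (𝓝 0) := by
    have h := (Real.continuousAt_rpow_const 0 α₁ (Or.inr hα₁pos.le)).tendsto
    rw [Real.zero_rpow (ne_of_gt hα₁pos)] at h
    exact h.mono_left nhdsWithin_le_nhds
  have hhigh : Tendsto (fun ε : ℝ => ε ^ (-α₂)) (𝓝[>] (0:ℝ)) atTop := by
    have h1 : Tendsto (fun ε : ℝ => (ε⁻¹) ^ α₂) (𝓝[>] (0:ℝ)) atTop :=
      (tendsto_rpow_atTop hα₂).comp tendsto_inv_nhdsGT_zero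
    refine h1.congr' ?_
    filter_upwards [self_mem_nhdsWithin] with ε (hε : 0 < ε)
    rw [Real.inv_rpow hε.le, ← Real.rpow_neg hε.le]
  intro κ
  rcases eq_or_ne κ 0 with rfl | hκne
  · -- κ = 0 : squeeze
    have hΦ0 : Φ 0 = 0 := by
      rw [hΦ₁ 0 le_rfl, abs_zero, Real.zero_rpow hγne, neg_zero]
    set β : ℝ := α₂ * (2*γ/(1-γ)) with hβ_def
    have hβpos : 0 < β := by
      apply mul_pos hα₂; positivity
    have hub : Tendsto (fun ε : ℝ => cγ * ε ^ β) (𝓝[>] (0:ℝ)) (𝓝 0) := by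
      have h := (Real.continuousAt_rpow_const 0 β (Or.inr hβpos.le)).tendsto
      rw [Real.zero_rpow (ne_of_gt hβpos)] at h
      have h2 : Tendsto (fun ε : ℝ => ε ^ β) (𝓝[>] (0:ℝ)) (𝓝 0) :=
        h.mono_left nhdsWithin_le_nhds
      simpa using h2.const_mul cγ
    apply tendsto_of_tendsto_of_tendsto_of_le_of_le' tendsto_const_nhds hub
    · filter_upwards with ε
      apply Real.sInf_nonneg
      rintro x ⟨s, -, rfl⟩
      exact abs_nonneg _
    · filter_upwards [self_mem_nhdsWithin, Ioo_mem_nhdsGT one_pos]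
        with ε (hε : 0 < ε) hε1
      have hε1' : ε < 1 := hε1.2
      have hmem : ε ^ (-α₂) ∈ Icc (ε ^ α₁) (ε ^ (-α₂)) := by
        constructor
        · exact Real.rpow_le_rpow_of_exponent_ge hε hε1'.le (by linarith)
        · exact le_refl _
      have hval : |φ (ε ^ (-α₂)) 0 - Φ 0| = cγ * ε ^ β := by
        have hb : (0:ℝ) < ε ^ (-α₂) := Real.rpow_pos_of_pos hε _
        rw [hΦ0, sub_zero, hφ, hf _ hb, ← Real.rpow_mul hε.le]
        have hexp : -α₂ * (2*γ/(γ-1)) = β := by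
          rw [hβ_def]
          have hγ1ne : γ - 1 ≠ 0 := by intro h; linarith
          field_simp
          ring
        rw [hexp]
        have h0 : (0:ℝ) * (ε ^ (-α₂))^2 / 2 - cγ * ε ^ β = -(cγ * ε ^ β) := by ring
        rw [h0, abs_neg, abs_of_nonneg (by positivity)]
      have h0m : cγ * ε ^ β ∈ (fun s => |φ s 0 - Φ 0|) '' Icc (ε ^ α₁) (ε ^ (-α₂)) :=
        ⟨ε ^ (-α₂), hmem, hval⟩
      exact csInf_le ⟨0, by rintro x ⟨s, -, rfl⟩; exact abs_nonneg _⟩ h0m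
  · -- κ ≠ 0: eventually sInf = 0
    obtain ⟨s₀, hs₀, hroot⟩ := exist_root κ hκne
    have hA : ∀ᶠ ε in 𝓝[>] (0:ℝ), ε ^ α₁ ≤ s₀ :=
      (hlow.eventually_lt_const hs₀).mono fun ε h => h.le
    have hB : ∀ᶠ ε in 𝓝[>] (0:ℝ), s₀ ≤ ε ^ (-α₂) := hhigh.eventually_ge_atTop s₀
    have hev : ∀ᶠ ε in 𝓝[>] (0:ℝ),
        sInf ((fun s => |φ s κ - Φ κ|) '' Icc (ε ^ α₁) (ε ^ (-α₂))) = 0 := by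
      filter_upwards [hA, hB] with ε h1 h2
      have h0m : (0:ℝ) ∈ (fun s => |φ s κ - Φ κ|) '' Icc (ε ^ α₁) (ε ^ (-α₂)) :=
        ⟨s₀, ⟨h1, h2⟩, by show |φ s₀ κ - Φ κ| = 0; rw [hroot]; simp⟩
      have hlb : ∀ x ∈ (fun s => |φ s κ - Φ κ|) '' Icc (ε ^ α₁) (ε ^ (-α₂)), (0:ℝ) ≤ x := by
        rintro x ⟨s, -, rfl⟩; exact abs_nonneg _
      exact le_antisymm (csInf_le ⟨0, hlb⟩ h0m) (le_csInf ⟨0, h0m⟩ hlb)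
    exact tendsto_const_nhds.congr' (hev.mono fun ε h => h.symm)
end

section
/- Let 1/3 < γ < 1, c_γ = (1−γ)·(2γ)^{γ/(1−γ)}, let α₁, α₂ satisfy (1−γ)/(2γ) < α₁ < min(1, (1−γ)/γ) and 0 < α₂ < min(2γα₁/(1−γ) − 1, 1/3), let 0 < μ < 2α₂/(1−γ) and K > 0. Then there exists ε₀ > 0 such that for every ε ∈ (0, ε₀) and every κ with −K ≤ κ < 0 and |κ| > ε^{μ}, the maximizer s_max(κ) = ((1−γ)|κ|/(2γ·c_γ))^{(γ−1)/2} of s ↦ κ·s²/2 − f(s) lies in the interval I_ε = [ε^{α₁}, ε^{−α₂}]. -/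
open Set

/-- Under the parameter conditions on `α₁, α₂`, for `0 < μ < 2α₂/(1−γ)` and
`K > 0` there exists `ε₀ > 0` such that for every `ε ∈ (0, ε₀)` and every `κ` with
`−K ≤ κ < 0` and `|κ| > ε^μ`, the maximizer `s_max(κ) = ((1−γ)|κ|/(2γc_γ))^{(γ−1)/2}` of
`s ↦ κs²/2 − f(s)` lies in `I_ε = [ε^{α₁}, ε^{−α₂}]`. -/
theorem statement_10 (γ cγ α₁ α₂ μ K : ℝ) (hγ₁ : 1/3 < γ) (hγ₂ : γ < 1)
    (hcγ : cγ = (1 - γ) * (2*γ) ^ (γ/(1-γ)))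
    (hα₁ : (1-γ)/(2*γ) < α₁) (hα₁' : α₁ < min 1 ((1-γ)/γ))
    (hα₂ : 0 < α₂) (hα₂' : α₂ < min (2*γ*α₁/(1-γ) - 1) (1/3))
    (hμ : 0 < μ) (hμ' : μ < 2*α₂/(1-γ)) (hK : 0 < K) :
    ∃ ε₀ > (0:ℝ), ∀ ε : ℝ, 0 < ε → ε < ε₀ →
      ∀ κ : ℝ, -K ≤ κ → κ < 0 → ε ^ μ < |κ| →
        ((1-γ) * |κ| / (2*γ*cγ)) ^ ((γ-1)/2) ∈ Icc (ε ^ α₁) (ε ^ (-α₂)) := by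
  have hγ0 : 0 < γ := by linarith
  have h1γ : 0 < 1 - γ := by linarith
  have h2γ : 0 < 2 * γ := by linarith
  have hcγ0 : 0 < cγ := by
    rw [hcγ]
    exact mul_pos h1γ (Real.rpow_pos_of_pos h2γ _)
  set C : ℝ := (1 - γ) / (2 * γ * cγ) with hCdef
  have hC : 0 < C := div_pos h1γ (by positivity)
  set β : ℝ := (γ - 1) / 2 with hβdef
  have hβ : β < 0 := by rw [hβdef]; linarith
  set δ : ℝ := α₂ + μ * β with hδdef
  have hδ : 0 < δ := by
    have h1 : μ * (1 - γ) < 2 * α₂ := by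
      rw [lt_div_iff₀ h1γ] at hμ'; linarith
    rw [hδdef, hβdef]; nlinarith
  have hα₁0 : 0 < α₁ := lt_trans (by positivity) hα₁
  set L : ℝ := (C * K) ^ β with hLdef
  have hL : 0 < L := Real.rpow_pos_of_pos (by positivity) _
  set M : ℝ := C ^ (-β) with hMdef
  have hM : 0 < M := Real.rpow_pos_of_pos hC _
  refine ⟨min 1 (min (L ^ (1/α₁)) (M ^ (1/δ))), by positivity, ?_⟩
  intro ε hε hε₀ κ hκK hκ0 hκε
  have hκ : 0 < |κ| := abs_pos.mpr (ne_of_lt hκ0)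
  have hκK' : |κ| ≤ K := by rw [abs_of_neg hκ0]; linarith
  have hε1 : ε < 1 := lt_of_lt_of_le hε₀ (min_le_left _ _)
  have hεL : ε < L ^ (1/α₁) :=
    lt_of_lt_of_le hε₀ (le_trans (min_le_right _ _) (min_le_left _ _))
  have hεM : ε < M ^ (1/δ) :=
    lt_of_lt_of_le hε₀ (le_trans (min_le_right _ _) (min_le_right _ _))
  have hrw : (1-γ) * |κ| / (2*γ*cγ) = C * |κ| := by rw [hCdef]; ring
  rw [hrw]
  constructor
  · -- lower bound
    have h1 : ε ^ α₁ ≤ (L ^ (1/α₁)) ^ α₁ :=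
      Real.rpow_le_rpow hε.le hεL.le hα₁0.le
    have h2 : (L ^ (1/α₁)) ^ α₁ = L := by
      rw [← Real.rpow_mul hL.le, one_div, inv_mul_cancel₀ (ne_of_gt hα₁0),
        Real.rpow_one]
    have h3 : L ≤ (C * |κ|) ^ β := by
      rw [hLdef]
      exact Real.rpow_le_rpow_of_nonpos (by positivity)
        (by nlinarith) hβ.le
    calc ε ^ α₁ ≤ L := h2 ▸ h1
      _ ≤ _ := h3
  · -- upper bound
    have h1 : (C * |κ|) ^ β ≤ (C * ε ^ μ) ^ β :=
      Real.rpow_le_rpow_of_nonpos (by positivity) (by nlinarith) hβ.le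
    have h2 : (C * ε ^ μ) ^ β = C ^ β * ε ^ (μ * β) := by
      rw [Real.mul_rpow hC.le (by positivity), ← Real.rpow_mul hε.le]
    have hCβ : C ^ β ≤ ε ^ (-δ) := by
      have hεδ : ε ^ δ ≤ M := by
        have := Real.rpow_le_rpow hε.le hεM.le hδ.le
        rwa [← Real.rpow_mul hM.le, one_div, inv_mul_cancel₀ (ne_of_gt hδ),
          Real.rpow_one] at this
      have h4 : M⁻¹ ≤ (ε ^ δ)⁻¹ :=
        inv_anti₀ (Real.rpow_pos_of_pos hε _) hεδ
      rwa [hMdef, ← Real.rpow_neg hC.le, neg_neg, ← Real.rpow_neg hε.le] at h4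
    have h5 : ε ^ (-α₂) = ε ^ (-δ) * ε ^ (μ * β) := by
      rw [← Real.rpow_add hε, hδdef]; ring_nf
    calc (C * |κ|) ^ β ≤ C ^ β * ε ^ (μ * β) := h2 ▸ h1
      _ ≤ ε ^ (-δ) * ε ^ (μ * β) :=
        mul_le_mul_of_nonneg_right hCβ (Real.rpow_nonneg hε.le _)
      _ = ε ^ (-α₂) := h5.symm
end

section
/- Let 1/3 < γ < 1, c_γ = (1−γ)·(2γ)^{γ/(1−γ)}, f(s) = c_γ·s^{2γ/(γ−1)}, and let α₁, α₂ satisfy (1−γ)/(2γ) < α₁ < min(1, (1−γ)/γ) and 0 < α₂ < min(2γα₁/(1−γ) − 1, 1/3). Then there exists ε₀ ∈ (0,1) such that for all ε ∈ (0, ε₀): (ε·ε^{α₁})² + (ε²f(ε^{α₁}))² > (ε·ε^{−α₂})² + (ε²f(ε^{−α₂}))²; that is, the left endpoint of the game curve Γ(ε^{α₁}, ε^{−α₂}) is strictly farther from the origin than the right endpoint. -/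
open Set

/-- Under the parameter conditions on `α₁, α₂` there is `ε₀ ∈ (0,1)` such
that for all `ε ∈ (0, ε₀)` the left endpoint of the game curve `Γ(ε^{α₁}, ε^{−α₂})` is
strictly farther from the origin than the right endpoint:
`(ε·ε^{α₁})² + (ε²f(ε^{α₁}))² > (ε·ε^{−α₂})² + (ε²f(ε^{−α₂}))²`. -/
theorem statement_13 (γ cγ α₁ α₂ : ℝ) (hγ₁ : 1/3 < γ) (hγ₂ : γ < 1)
    (hcγ : cγ = (1 - γ) * (2*γ) ^ (γ/(1-γ)))
    (f : ℝ → ℝ) (hf : ∀ s : ℝ, 0 < s → f s = cγ * s ^ (2*γ/(γ-1)))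
    (hα₁ : (1-γ)/(2*γ) < α₁) (hα₁' : α₁ < min 1 ((1-γ)/γ))
    (hα₂ : 0 < α₂) (hα₂' : α₂ < min (2*γ*α₁/(1-γ) - 1) (1/3)) :
    ∃ ε₀ ∈ Ioo (0:ℝ) 1, ∀ ε : ℝ, 0 < ε → ε < ε₀ →
      (ε * ε ^ α₁)^2 + (ε^2 * f (ε ^ α₁))^2
        > (ε * ε ^ (-α₂))^2 + (ε^2 * f (ε ^ (-α₂)))^2 := by
  have hγ0 : 0 < γ := by linarith
  have h1γ : 0 < 1 - γ := by linarith
  have hc : 0 < cγ := by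
    rw [hcγ]; positivity
  set e : ℝ := 2*γ/(γ-1) with he
  have hne : γ - 1 ≠ 0 := by linarith
  have hne2 : (1:ℝ) - γ ≠ 0 := by linarith
  have hee : α₁ * e = -(2*γ*α₁/(1-γ)) := by
    rw [he]; field_simp; ring
  have hα₂1 : α₂ < 2*γ*α₁/(1-γ) - 1 := lt_of_lt_of_le hα₂' (min_le_left _ _)
  have hAe : α₁ * e < -1 - α₂ := by rw [hee]; linarith
  have heneg : e < 0 := div_neg_of_pos_of_neg (by linarith) (by linarith)
  have hbe : 0 < (-α₂) * e := mul_pos_of_neg_of_neg (by linarith) heneg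
  set δ : ℝ := (2 - 2*α₂) - (4 + 2*(α₁*e)) with hδdef
  have hδ : 0 < δ := by rw [hδdef]; linarith
  set K : ℝ := cγ^2 / (cγ^2 + 1) with hK
  have hKpos : 0 < K := by positivity
  have hK1 : K < 1 := by
    rw [hK, div_lt_one (by positivity)]; linarith
  refine ⟨min (1/2) (K ^ (1/δ)), ⟨lt_min (by norm_num) (Real.rpow_pos_of_pos hKpos _),
    lt_of_le_of_lt (min_le_left _ _) (by norm_num)⟩, ?_⟩
  intro ε hε hεlt
  have hε1 : ε < 1 := lt_of_lt_of_le (lt_of_lt_of_le hεlt (min_le_left _ _)) (by norm_num)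
  have key : ∀ p : ℝ, (ε * ε^p)^2 + (ε^2 * f (ε^p))^2
      = ε^((2:ℝ)+2*p) + cγ^2 * ε^((4:ℝ)+2*(p*e)) := by
    intro p
    rw [hf _ (Real.rpow_pos_of_pos hε _), ← Real.rpow_mul hε.le]
    rw [show (2:ℝ)+2*p = (1+p)+(1+p) by ring, show (4:ℝ)+2*(p*e) = (2+p*e)+(2+p*e) by ring]
    rw [Real.rpow_add hε, Real.rpow_add hε (2+p*e), Real.rpow_add hε 1 p,
      Real.rpow_add hε 2 (p*e), Real.rpow_one]
    have h2 : ε ^ (2:ℝ) = ε^(2:ℕ) := by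
      rw [← Real.rpow_natCast ε 2]; norm_num
    rw [h2]; ring
  rw [key, key]
  -- RHS second term is smaller than ε^(2-2α₂)
  have h1 : ε^((4:ℝ)+2*((-α₂)*e)) < ε^((2:ℝ)+2*(-α₂)) :=
    Real.rpow_lt_rpow_of_exponent_gt hε hε1 (by linarith)
  have hsplit : ε^((2:ℝ)+2*(-α₂)) = ε^((4:ℝ)+2*(α₁*e)) * ε^δ := by
    rw [← Real.rpow_add hε, hδdef]; ring_nf
  have hεδ : ε^δ < K := by
    have h2 : ε^δ < (K ^ (1/δ))^δ :=
      Real.rpow_lt_rpow hε.le (lt_of_lt_of_le hεlt (min_le_right _ _)) hδ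
    rwa [← Real.rpow_mul hKpos.le, one_div, inv_mul_cancel₀ hδ.ne',
      Real.rpow_one] at h2
  have hApos : 0 < ε^((4:ℝ)+2*(α₁*e)) := Real.rpow_pos_of_pos hε _
  have hKey : (cγ^2 + 1) * K = cγ^2 := by
    rw [hK]; field_simp
  have hLpos : 0 < ε^((2:ℝ)+2*α₁) := Real.rpow_pos_of_pos hε _
  have hstep : (cγ^2+1) * ε^((2:ℝ)+2*(-α₂)) < cγ^2 * ε^((4:ℝ)+2*(α₁*e)) := by
    rw [hsplit]
    have h3 := mul_lt_mul_of_pos_left (mul_lt_mul_of_pos_left hεδ hApos)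
      (show (0:ℝ) < cγ^2+1 by positivity)
    have h4 : (cγ^2+1) * (ε^((4:ℝ)+2*(α₁*e)) * K) = cγ^2 * ε^((4:ℝ)+2*(α₁*e)) := by
      linear_combination ε^((4:ℝ)+2*(α₁*e)) * hKey
    linarith [h3, h4]
  have h1' : cγ^2 * ε^((4:ℝ)+2*((-α₂)*e)) < cγ^2 * ε^((2:ℝ)+2*(-α₂)) :=
    mul_lt_mul_of_pos_left h1 (by positivity)
  linarith [h1', hstep, hLpos]
end

section
/- Let 1/3 < γ < 1, c_γ = (1−γ)·(2γ)^{γ/(1−γ)}, f(s) = c_γ·s^{2γ/(γ−1)}, let α₁, α₂ satisfy (1−γ)/(2γ) < α₁ < min(1, (1−γ)/γ) and 0 < α₂ < min(2γα₁/(1−γ) − 1, 1/3), and set g(s) = (εs)² + (ε²f(s))² and s̃ = ( 2γ·c_γ²·ε²/(1−γ) )^{(1−γ)/(2(γ+1))}. Then there exists ε₀ ∈ (0,1) such that for all ε ∈ (0, ε₀): ε^{α₁} ≤ s̃ ≤ ε^{−α₂}, and for every s' ∈ [s̃, ε^{−α₂}] there exists s ∈ [ε^{α₁}, s̃] with g(s)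 = g(s'). Equivalently, every point of Γ(s̃, ε^{−α₂}) can be carried into Γ(ε^{α₁}, s̃) by a rotation of the plane about the origin. -/
open Set

lemma aux_small (a c : ℝ) (ha : 0 < a) (hc : 0 < c) :
    ∃ e ∈ Ioo (0:ℝ) 1, ∀ ε : ℝ, 0 < ε → ε < e → ε ^ a ≤ c := by
  have hm : 0 < min c 1 := lt_min hc one_pos
  refine ⟨min (1/2) ((min c 1) ^ (1/a)), ⟨lt_min (by norm_num) (Real.rpow_pos_of_pos hm _),
    lt_of_le_of_lt (min_le_left _ _) (by norm_num)⟩, ?_⟩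
  intro ε hε hεe
  have h1 : ε ≤ (min c 1) ^ (1/a) := le_of_lt (lt_of_lt_of_le hεe (min_le_right _ _))
  have h2 := Real.rpow_le_rpow hε.le h1 ha.le
  rw [← Real.rpow_mul hm.le, one_div, inv_mul_cancel₀ ha.ne', Real.rpow_one] at h2
  exact h2.trans (min_le_left _ _)

lemma aux_mono (ε cγ q : ℝ) (hε : 0 < ε) (hcγ : 0 < cγ) (hq : q < 0) :
    MonotoneOn (fun x => ε^2*x^2 + ε^4*cγ^2*x^(2*q))
      (Ici (((-q)*cγ^2*ε^2) ^ (1/(2-2*q)))) := by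
  have hbase : 0 < (-q)*cγ^2*ε^2 :=
    mul_pos (mul_pos (neg_pos.mpr hq) (pow_pos hcγ 2)) (pow_pos hε 2)
  set st := ((-q)*cγ^2*ε^2) ^ (1/(2-2*q)) with hst
  have hst0 : 0 < st := Real.rpow_pos_of_pos hbase _
  have h2q : 0 < 2 - 2*q := by linarith
  have hstpow : st ^ (2 - 2*q) = (-q)*cγ^2*ε^2 := by
    rw [hst, ← Real.rpow_mul hbase.le, one_div, inv_mul_cancel₀ h2q.ne', Real.rpow_one]
  have hD : ∀ x : ℝ, 0 < x → HasDerivAt (fun x => ε^2*x^2 + ε^4*cγ^2*x^(2*q))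
      (ε^2*(2*x) + ε^4*cγ^2*((2*q)*x^(2*q-1))) x := by
    intro x hx0
    have h1 : HasDerivAt (fun x : ℝ => x^2) (2*x) x := by
      simpa using hasDerivAt_pow 2 x
    have h2 : HasDerivAt (fun x : ℝ => x^(2*q)) ((2*q)*x^(2*q-1)) x :=
      Real.hasDerivAt_rpow_const (Or.inl hx0.ne')
    exact (h1.const_mul (ε^2)).add (h2.const_mul (ε^4*cγ^2))
  apply monotoneOn_of_deriv_nonneg (convex_Ici st)
  · apply ContinuousOn.add
    · exact (continuous_const.mul (continuous_pow 2)).continuousOn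
    · exact continuousOn_const.mul (ContinuousOn.rpow_const continuousOn_id
        (fun x hx => Or.inl (ne_of_gt (lt_of_lt_of_le hst0 hx))))
  · rw [interior_Ici]
    intro x hx
    exact ((hD x (lt_trans hst0 hx)).differentiableAt).differentiableWithinAt
  · intro x hx
    rw [interior_Ici] at hx
    have hx0 : 0 < x := lt_trans hst0 hx
    rw [(hD x hx0).deriv]
    have hxp : 0 < x ^ (2*q - 1) := Real.rpow_pos_of_pos hx0 _
    have hge : (-q)*cγ^2*ε^2 ≤ x ^ (2-2*q) := by
      rw [← hstpow]; exact Real.rpow_le_rpow hst0.le (le_of_lt hx) h2q.le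
    have key : ε^4*cγ^2*((-(2*q))*x^(2*q-1)) ≤ ε^2*(2*x) := by
      have h1 : x^(2-2*q) * x^(2*q-1) = x := by
        rw [← Real.rpow_add hx0]
        norm_num
      calc ε^4*cγ^2*((-(2*q))*x^(2*q-1))
          = 2*((-q)*cγ^2*ε^2) * x^(2*q-1) * ε^2 := by ring
        _ ≤ 2*(x^(2-2*q)) * x^(2*q-1) * ε^2 := by
            apply mul_le_mul_of_nonneg_right _ (sq_nonneg ε)
            apply mul_le_mul_of_nonneg_right _ hxp.le
            exact mul_le_mul_of_nonneg_left hge (by norm_num)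
        _ = 2*(x^(2-2*q) * x^(2*q-1)) * ε^2 := by ring
        _ = ε^2*(2*x) := by rw [h1]; ring
    have heq : ε^4*cγ^2*((2*q)*x^(2*q-1)) = -(ε^4*cγ^2*((-(2*q))*x^(2*q-1))) := by ring
    rw [heq]
    linarith [key]

/-- Under the parameter conditions on `α₁, α₂`, with
`g(s) = (εs)² + (ε²f(s))²` and `s̃ = (2γc_γ²ε²/(1−γ))^{(1−γ)/(2(γ+1))}`, there is
`ε₀ ∈ (0,1)` such that for all `ε ∈ (0, ε₀)` one has `ε^{α₁} ≤ s̃ ≤ ε^{−α₂}` and every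
point of `Γ(s̃, ε^{−α₂})` can be carried into `Γ(ε^{α₁}, s̃)` by a rotation about the
origin, i.e. for every `s' ∈ [s̃, ε^{−α₂}]` there exists `s ∈ [ε^{α₁}, s̃]` with
`g(s) = g(s')`. -/
theorem statement_14 (γ cγ α₁ α₂ : ℝ) (hγ₁ : 1/3 < γ) (hγ₂ : γ < 1)
    (hcγ : cγ = (1 - γ) * (2*γ) ^ (γ/(1-γ)))
    (f : ℝ → ℝ) (hf : ∀ s : ℝ, 0 < s → f s = cγ * s ^ (2*γ/(γ-1)))
    (hα₁ : (1-γ)/(2*γ) < α₁) (hα₁' : α₁ < min 1 ((1-γ)/γ))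
    (hα₂ : 0 < α₂) (hα₂' : α₂ < min (2*γ*α₁/(1-γ) - 1) (1/3)) :
    ∃ ε₀ ∈ Ioo (0:ℝ) 1, ∀ ε : ℝ, 0 < ε → ε < ε₀ →
      ε ^ α₁ ≤ (2*γ*cγ^2*ε^2/(1-γ)) ^ ((1-γ)/(2*(γ+1))) ∧
      (2*γ*cγ^2*ε^2/(1-γ)) ^ ((1-γ)/(2*(γ+1))) ≤ ε ^ (-α₂) ∧
      ∀ s' ∈ Icc ((2*γ*cγ^2*ε^2/(1-γ)) ^ ((1-γ)/(2*(γ+1)))) (ε ^ (-α₂)),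
        ∃ s ∈ Icc (ε ^ α₁) ((2*γ*cγ^2*ε^2/(1-γ)) ^ ((1-γ)/(2*(γ+1)))),
          (ε*s)^2 + (ε^2 * f s)^2 = (ε*s')^2 + (ε^2 * f s')^2 := by
  have hγ0 : 0 < γ := by linarith
  have h1γ : 0 < 1 - γ := by linarith
  have hcγ0 : 0 < cγ := by rw [hcγ]; positivity
  set q := 2*γ/(γ-1) with hqdef
  have hq : q < 0 := div_neg_of_pos_of_neg (by linarith) (by linarith)
  set β' := (1-γ)/(2*(γ+1)) with hβdef
  have hβ0 : 0 < β' := div_pos h1γ (by linarith)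
  have hne1 : γ - 1 ≠ 0 := by intro h; linarith
  have hne2 : (1:ℝ) - γ ≠ 0 := ne_of_gt h1γ
  have hβq : β' = 1/(2-2*q) := by
    rw [hβdef, hqdef,
      show (2:ℝ) - 2*(2*γ/(γ-1)) = 2*(γ+1)/(1-γ) by field_simp; ring, one_div_div]
  set K := 2*γ*cγ^2/(1-γ) with hKdef
  have hK0 : 0 < K := div_pos (by positivity) h1γ
  have hKq : K = (-q)*cγ^2 := by
    rw [hKdef, hqdef]
    field_simp
    ring
  set p := -(2*q) with hpdef
  have hp0 : 0 < p := by rw [hpdef]; linarith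
  clear_value q β' K p
  have ha1 : 0 < α₁ - 2*β' := by
    have hne3 : γ + 1 ≠ 0 := by intro h; linarith
    have h2β : 2*β' = (1-γ)/(γ+1) := by rw [hβdef]; field_simp
    have hcmp : (1-γ)/(γ+1) ≤ (1-γ)/(2*γ) := by
      gcongr
      linarith
    linarith
  have ha3 : 0 < p*α₁ - 2 - 2*α₂ := by
    have hm := lt_of_lt_of_le hα₂' (min_le_left _ _)
    have hpe : 2*γ*α₁/(1-γ) = p*α₁/2 := by
      rw [hpdef, hqdef]
      field_simp
      ring
    rw [hpe] at hm
    linarith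
  have ha4 : 0 < p*(α₁-2*β') := mul_pos hp0 ha1
  have ha2 : 0 < 2*β' + α₂ := by linarith
  obtain ⟨e1, he1, H1⟩ := aux_small (α₁-2*β') (K^β') ha1 (Real.rpow_pos_of_pos hK0 _)
  obtain ⟨e2, he2, H2⟩ := aux_small (2*β'+α₂) ((K^β')⁻¹) ha2
    (inv_pos.mpr (Real.rpow_pos_of_pos hK0 _))
  obtain ⟨e3, he3, H3⟩ := aux_small (p*α₁-2-2*α₂) (cγ^2/2) ha3 (by positivity)
  obtain ⟨e4, he4, H4⟩ := aux_small (p*(α₁-2*β')) (K^(β'*p)/2) ha4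
    (div_pos (Real.rpow_pos_of_pos hK0 _) two_pos)
  refine ⟨min (min e1 e2) (min e3 e4),
    ⟨lt_min (lt_min he1.1 he2.1) (lt_min he3.1 he4.1),
     lt_of_le_of_lt (le_trans (min_le_left _ _) (min_le_left _ _)) he1.2⟩, ?_⟩
  intro ε hε0 hεe
  have hεe1 : ε < e1 := lt_of_lt_of_le hεe (le_trans (min_le_left _ _) (min_le_left _ _))
  have hεe2 : ε < e2 := lt_of_lt_of_le hεe (le_trans (min_le_left _ _) (min_le_right _ _))
  have hεe3 : ε < e3 := lt_of_lt_of_le hεe (le_trans (min_le_right _ _) (min_le_left _ _))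
  have hεe4 : ε < e4 := lt_of_lt_of_le hεe (le_trans (min_le_right _ _) (min_le_right _ _))
  have hKe : 2*γ*cγ^2*ε^2/(1-γ) = K*ε^2 := by rw [hKdef]; ring
  rw [hKe]
  set st := (K*ε^2)^β' with hstdef
  have hKe0 : 0 < K*ε^2 := mul_pos hK0 (pow_pos hε0 2)
  have hst0 : 0 < st := Real.rpow_pos_of_pos hKe0 _
  have E2 : ε^(2:ℝ) = ε^2 := by
    rw [show (2:ℝ) = ((2:ℕ):ℝ) by norm_num, Real.rpow_natCast]
  have E4 : ε^(4:ℝ) = ε^4 := by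
    rw [show (4:ℝ) = ((4:ℕ):ℝ) by norm_num, Real.rpow_natCast]
  have hstF : st = K^β' * ε^(2*β') := by
    rw [hstdef, Real.mul_rpow hK0.le (sq_nonneg ε), ← E2, ← Real.rpow_mul hε0.le]
  -- Goal 1
  have g1 : ε^α₁ ≤ st := by
    have h := H1 ε hε0 hεe1
    have hsplit : ε^α₁ = ε^(α₁-2*β') * ε^(2*β') := by
      rw [← Real.rpow_add hε0]; congr 1; ring
    rw [hsplit, hstF]
    exact mul_le_mul_of_nonneg_right h (Real.rpow_nonneg hε0.le _)
  -- Goal 2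
  have g2 : st ≤ ε^(-α₂) := by
    have h := H2 ε hε0 hεe2
    have h2' : st * ε^α₂ ≤ 1 := by
      rw [hstF, mul_assoc, ← Real.rpow_add hε0]
      calc K^β' * ε^(2*β'+α₂) ≤ K^β' * (K^β')⁻¹ :=
            mul_le_mul_of_nonneg_left h (Real.rpow_nonneg hK0.le _)
        _ = 1 := mul_inv_cancel₀ (ne_of_gt (Real.rpow_pos_of_pos hK0 _))
    calc st = st * ε^α₂ * ε^(-α₂) := by
          rw [mul_assoc, ← Real.rpow_add hε0]; simp
      _ ≤ 1 * ε^(-α₂) := mul_le_mul_of_nonneg_right h2' (Real.rpow_nonneg hε0.le _)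
      _ = ε^(-α₂) := one_mul _
  refine ⟨g1, g2, ?_⟩
  intro s' hs'
  have hs'0 : 0 < s' := lt_of_lt_of_le hst0 hs'.1
  set G := fun x : ℝ => ε^2*x^2 + ε^4*cγ^2*x^(2*q) with hGdef
  have hGf : ∀ x : ℝ, 0 < x → (ε*x)^2 + (ε^2 * f x)^2 = G x := by
    intro x hx
    have hxq : (x ^ q)^2 = x^(2*q) := by
      rw [← Real.rpow_natCast (x^q) 2, ← Real.rpow_mul hx.le]
      congr 1; push_cast; ring
    rw [hf x hx]
    simp only [hGdef]
    calc (ε*x)^2 + (ε^2*(cγ*x^q))^2 = ε^2*x^2 + ε^4*cγ^2*((x^q)^2) := by ring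
      _ = ε^2*x^2 + ε^4*cγ^2*x^(2*q) := by rw [hxq]
  have hsteq : st = ((-q)*cγ^2*ε^2) ^ (1/(2-2*q)) := by
    rw [hstdef, hKq, hβq]
  have hmono : MonotoneOn G (Ici st) := by
    rw [hGdef, hsteq]
    exact aux_mono ε cγ q hε0 hcγ0 hq
  -- upper bounds
  have hu1 : ε^2*s'^2 ≤ cγ^2/2 * ε^(4-p*α₁) := by
    have h1 : s'^2 ≤ (ε^(-α₂))^2 := pow_le_pow_left₀ hs'0.le hs'.2 2
    have h2 : ε^2*(ε^(-α₂))^2 = ε^(p*α₁-2-2*α₂) * ε^(4-p*α₁) := by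
      rw [← E2, ← Real.rpow_natCast (ε^(-α₂)) 2, ← Real.rpow_mul hε0.le,
        ← Real.rpow_add hε0, ← Real.rpow_add hε0]
      congr 1; push_cast; ring
    have h3 := H3 ε hε0 hεe3
    calc ε^2*s'^2 ≤ ε^2*(ε^(-α₂))^2 := mul_le_mul_of_nonneg_left h1 (sq_nonneg ε)
      _ = ε^(p*α₁-2-2*α₂) * ε^(4-p*α₁) := h2
      _ ≤ cγ^2/2 * ε^(4-p*α₁) :=
          mul_le_mul_of_nonneg_right h3 (Real.rpow_nonneg hε0.le _)
  have hu2 : ε^4*cγ^2*s'^(2*q) ≤ cγ^2/2 * ε^(4-p*α₁) := by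
    have h1 : s'^(2*q) ≤ st^(2*q) :=
      Real.rpow_le_rpow_of_nonpos hst0 hs'.1 (by linarith)
    have hst2q : st^(2*q) = K^(β'*(2*q)) * ε^(2*β'*(2*q)) := by
      rw [hstF, Real.mul_rpow (Real.rpow_nonneg hK0.le _) (Real.rpow_nonneg hε0.le _),
        ← Real.rpow_mul hK0.le, ← Real.rpow_mul hε0.le]
    have hεsplit : ε^(4:ℝ) * ε^(2*β'*(2*q)) = ε^(p*(α₁-2*β')) * ε^(4-p*α₁) := by
      rw [← Real.rpow_add hε0, ← Real.rpow_add hε0]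
      congr 1; rw [hpdef]; ring
    have h2 : ε^4*cγ^2*st^(2*q) = cγ^2 * K^(β'*(2*q)) * (ε^(p*(α₁-2*β')) * ε^(4-p*α₁)) := by
      calc ε^4*cγ^2*st^(2*q)
          = cγ^2 * K^(β'*(2*q)) * (ε^(4:ℝ) * ε^(2*β'*(2*q))) := by rw [hst2q, E4]; ring
        _ = cγ^2 * K^(β'*(2*q)) * (ε^(p*(α₁-2*β')) * ε^(4-p*α₁)) := by rw [hεsplit]
    have h3 := H4 ε hε0 hεe4
    have hKc : K^(β'*(2*q)) * K^(β'*p) = 1 := by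
      rw [← Real.rpow_add hK0, show β'*(2*q) + β'*p = 0 by rw [hpdef]; ring, Real.rpow_zero]
    calc ε^4*cγ^2*s'^(2*q) ≤ ε^4*cγ^2*st^(2*q) :=
          mul_le_mul_of_nonneg_left h1 (by positivity)
      _ = cγ^2 * K^(β'*(2*q)) * (ε^(p*(α₁-2*β')) * ε^(4-p*α₁)) := h2
      _ ≤ cγ^2 * K^(β'*(2*q)) * ((K^(β'*p)/2) * ε^(4-p*α₁)) := by
          apply mul_le_mul_of_nonneg_left _
            (mul_nonneg (sq_nonneg cγ) (Real.rpow_nonneg hK0.le _))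
          exact mul_le_mul_of_nonneg_right h3 (Real.rpow_nonneg hε0.le _)
      _ = cγ^2 * (K^(β'*(2*q)) * K^(β'*p)) * ε^(4-p*α₁) / 2 := by ring
      _ = cγ^2/2 * ε^(4-p*α₁) := by rw [hKc]; ring
  have hu3 : cγ^2 * ε^(4-p*α₁) ≤ G (ε^α₁) := by
    have h1 : (ε^α₁)^(2*q) = ε^(α₁*(2*q)) := (Real.rpow_mul hε0.le α₁ (2*q)).symm
    have h2 : ε^4*cγ^2*ε^(α₁*(2*q)) = cγ^2 * ε^(4-p*α₁) := by
      calc ε^4*cγ^2*ε^(α₁*(2*q)) = cγ^2*(ε^(4:ℝ) * ε^(α₁*(2*q))) := by rw [E4]; ring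
        _ = cγ^2 * ε^(4-p*α₁) := by
            rw [← Real.rpow_add hε0]; congr 1; rw [hpdef]; ring
    have h3 : (0:ℝ) ≤ ε^2*(ε^α₁)^2 := by positivity
    simp only [hGdef]
    rw [h1, h2]
    linarith
  have hub : G s' ≤ G (ε^α₁) := by
    have hGs' : G s' = ε^2*s'^2 + ε^4*cγ^2*s'^(2*q) := rfl
    rw [hGs']
    calc ε^2*s'^2 + ε^4*cγ^2*s'^(2*q)
        ≤ cγ^2/2*ε^(4-p*α₁) + cγ^2/2*ε^(4-p*α₁) := add_le_add hu1 hu2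
      _ = cγ^2*ε^(4-p*α₁) := by ring
      _ ≤ G (ε^α₁) := hu3
  have hlb : G st ≤ G s' := hmono self_mem_Ici hs'.1 hs'.1
  have hcont : ContinuousOn G (Icc (ε^α₁) st) := by
    rw [hGdef]
    apply ContinuousOn.add
    · exact (continuous_const.mul (continuous_pow 2)).continuousOn
    · exact continuousOn_const.mul (ContinuousOn.rpow_const continuousOn_id
        (fun x hx => Or.inl (ne_of_gt (lt_of_lt_of_le (Real.rpow_pos_of_pos hε0 α₁) hx.1))))
  have hsub := intermediate_value_Icc' g1 hcont
  obtain ⟨s, hsmem, hGs⟩ := hsub ⟨hlb, hub⟩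
  refine ⟨s, hsmem, ?_⟩
  rw [hGf s (lt_of_lt_of_le (Real.rpow_pos_of_pos hε0 α₁) hsmem.1), hGf s' hs'0, hGs]
end
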